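/- Let (C, C₋, C₊) be a Reedy category, and let Γ be any one of the four categories ∫N(C), ∫N^{-,+}(C), Down_*(C), Down(C). Then the last-component functor last : Γ → C is a weak 1-localization of Γ at the class of last-weak equivalences of Γ: (i) last sends every last-weak equivalence to an isomorphism (indeed an identity); (ii) for every category E and every functor G : Γ → E sending all last-weak equivalences to isomorphisms, there exist a functor H : C → E and a natural isomorphism H ∘ last ≅ G; and (iii) for all functors H, H' : C → E, every natural isomorphism H ∘ last ⇒ H' ∘ last equals θ ▷ last for a unique natural isomorphism θ : H ⇒ H'. -/

import Mathlib

namespace ReedyPaper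

open CategoryTheory

universe v₂ u₂ v₁ u₁ v u

variable {C : Type u} [Category.{v} C]

def IsIdMor {x y : C} (f : x ⟶ y) : Prop := ∃ h : x = y, f = eqToHom h

structure ReedyStruct (C : Type u) [Category.{v} C] where
  neg : MorphismProperty C
  pos : MorphismProperty C
  neg_id : ∀ x : C, neg (𝟙 x)
  pos_id : ∀ x : C, pos (𝟙 x)
  neg_comp : ∀ {x y z : C} (f : x ⟶ y) (g : y ⟶ z), neg f → neg g → neg (f ≫ g)
  pos_comp : ∀ {x y z : C} (f : x ⟶ y) (g : y ⟶ z), pos f → pos g → pos (f ≫ g)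
  factor_existsUnique : ∀ {x y : C} (f : x ⟶ y),
    ∃! t : Σ z : C, (x ⟶ z) × (z ⟶ y), neg t.2.1 ∧ pos t.2.2 ∧ t.2.1 ≫ t.2.2 = f
  wf : WellFounded (fun x y : C =>
    (∃ f : x ⟶ y, pos f ∧ ¬ IsIdMor f) ∨ (∃ f : y ⟶ x, neg f ∧ ¬ IsIdMor f))

structure ChainObj (C : Type u) [Category.{v} C] where
  n : ℕ
  X : Fin (n + 1) ⥤ C

structure ChainHom (P Q : ChainObj C) where
  α : Fin (P.n + 1) →o Fin (Q.n + 1)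
  θ : ∀ i : Fin (P.n + 1), P.X.obj i ⟶ Q.X.obj (α i)
  natural : ∀ {i j : Fin (P.n + 1)} (h : i ≤ j),
    P.X.map (homOfLE h) ≫ θ j = θ i ≫ Q.X.map (homOfLE (α.monotone h))

theorem ChainHom.ext' {P Q : ChainObj C} {f g : ChainHom P Q}
    (hα : f.α = g.α) (hθ : HEq f.θ g.θ) : f = g := by
  cases f; cases g; cases hα; cases hθ; rfl

def ChainHom.id (P : ChainObj C) : ChainHom P P where
  α := OrderHom.id
  θ i := 𝟙 _
  natural h := by
    show P.X.map (homOfLE h) ≫ 𝟙 _ = 𝟙 _ ≫ P.X.map (homOfLE h)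
    rw [Category.comp_id, Category.id_comp]

def ChainHom.comp {P Q S : ChainObj C} (f : ChainHom P Q) (g : ChainHom Q S) :
    ChainHom P S where
  α := g.α.comp f.α
  θ i := f.θ i ≫ g.θ (f.α i)
  natural {i j} h := by
    show P.X.map (homOfLE h) ≫ f.θ j ≫ g.θ (f.α j) =
      (f.θ i ≫ g.θ (f.α i)) ≫ S.X.map (homOfLE (g.α.monotone (f.α.monotone h)))
    rw [← Category.assoc, f.natural h, Category.assoc, g.natural (f.α.monotone h),
      ← Category.assoc]

instance : Category (ChainObj C) where
  Hom := ChainHom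
  id := ChainHom.id
  comp := ChainHom.comp
  id_comp f := ChainHom.ext' rfl (heq_of_eq (funext fun i => Category.id_comp _))
  comp_id f := ChainHom.ext' rfl (heq_of_eq (funext fun i => Category.comp_id _))
  assoc f g h := ChainHom.ext' rfl (heq_of_eq (funext fun i => Category.assoc _ _ _))

/-- The partial order on the hom-sets of `∫N(C)` (and of `∫N^{-,+}(C)`):
`(α, θ) ≤ (α', θ')` iff `α ≤ α'` pointwise and `θ'ᵢ = Y(α(i) ≤ α'(i)) ∘ θᵢ` for all `i`. -/
def ChainHom.le {P Q : ChainObj C} (f g : ChainHom P Q) : Prop :=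
  (∀ i, f.α i ≤ g.α i) ∧
    ∀ (i : Fin (P.n + 1)) (h : f.α i ≤ g.α i), g.θ i = f.θ i ≫ Q.X.map (homOfLE h)

theorem ChainHom.le_comp_right {P Q S : ChainObj C} {f f' : P ⟶ Q} (g : Q ⟶ S)
    (h : ChainHom.le f f') : ChainHom.le (f ≫ g) (f' ≫ g) := by
  refine ⟨fun i => g.α.monotone (h.1 i), fun i hi => ?_⟩
  show f'.θ i ≫ g.θ (f'.α i) = (f.θ i ≫ g.θ (f.α i)) ≫ S.X.map (homOfLE hi)
  rw [h.2 i (h.1 i), Category.assoc, g.natural (h.1 i), ← Category.assoc]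
  rfl

theorem ChainHom.le_comp_left {P Q S : ChainObj C} (f : P ⟶ Q) {g g' : Q ⟶ S}
    (h : ChainHom.le g g') : ChainHom.le (f ≫ g) (f ≫ g') := by
  refine ⟨fun i => h.1 (f.α i), fun i hi => ?_⟩
  show f.θ i ≫ g'.θ (f.α i) = (f.θ i ≫ g.θ (f.α i)) ≫ S.X.map (homOfLE hi)
  rw [h.2 (f.α i) (h.1 (f.α i)), ← Category.assoc]
  rfl

/-- Objects of `∫N^{-,+}(C)`: chains all of whose morphisms lie in `C₋`. -/
structure NegObj (R : ReedyStruct C) where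
  n : ℕ
  X : Fin (n + 1) ⥤ C
  negMap : ∀ {i j : Fin (n + 1)} (h : i ≤ j), R.neg (X.map (homOfLE h))

variable {R : ReedyStruct C}

/-- The underlying object of `∫N(C)`. -/
def NegObj.chain (P : NegObj R) : ChainObj C := ⟨P.n, P.X⟩

/-- Morphisms of `∫N^{-,+}(C)`: morphisms of `∫N(C)` all of whose components lie in `C₊`. -/
def NegHomT (P Q : NegObj R) : Type v :=
  { f : P.chain ⟶ Q.chain // ∀ i, R.pos (f.θ i) }

def NegHomT.id (P : NegObj R) : NegHomT P P := ⟨𝟙 P.chain, fun _ => R.pos_id _⟩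

def NegHomT.comp {P Q S : NegObj R} (f : NegHomT P Q) (g : NegHomT Q S) : NegHomT P S :=
  ⟨f.1 ≫ g.1, fun i => by
    show R.pos (f.1.θ i ≫ g.1.θ (f.1.α i))
    exact R.pos_comp _ _ (f.2 i) (g.2 _)⟩

theorem NegHomT.id_comp {P Q : NegObj R} (f : NegHomT P Q) : (NegHomT.id P).comp f = f := by
  apply Subtype.ext
  show 𝟙 P.chain ≫ f.1 = f.1
  exact Category.id_comp f.1

theorem NegHomT.comp_id {P Q : NegObj R} (f : NegHomT P Q) : f.comp (NegHomT.id Q) = f := by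
  apply Subtype.ext
  show f.1 ≫ 𝟙 Q.chain = f.1
  exact Category.comp_id f.1

theorem NegHomT.comp_assoc {P Q S T : NegObj R} (f : NegHomT P Q) (g : NegHomT Q S)
    (h : NegHomT S T) : (f.comp g).comp h = f.comp (g.comp h) := by
  apply Subtype.ext
  show (f.1 ≫ g.1) ≫ h.1 = f.1 ≫ (g.1 ≫ h.1)
  exact Category.assoc f.1 g.1 h.1

/-- The category `∫N^{-,+}(C)`. -/
instance : Category (NegObj R) where
  Hom := NegHomT
  id := NegHomT.id
  comp := NegHomT.comp
  id_comp := NegHomT.id_comp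
  comp_id := NegHomT.comp_id
  assoc := NegHomT.comp_assoc

/-- The order on the hom-sets of `∫N^{-,+}(C)`. -/
def NegHom.le {P Q : NegObj R} (f g : P ⟶ Q) : Prop := ChainHom.le f.1 g.1

/-- The equivalence relation `∼` on the hom-sets of `∫N^{-,+}(C)`: the
symmetric-transitive closure of `≤`. -/
def NegHom.equiv {P Q : NegObj R} (f g : P ⟶ Q) : Prop :=
  Relation.EqvGen (fun a b : P ⟶ Q => NegHom.le a b) f g

theorem NegHom.le_comp_right {P Q S : NegObj R} {f f' : P ⟶ Q} (g : Q ⟶ S)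
    (h : NegHom.le f f') : NegHom.le (f ≫ g) (f' ≫ g) :=
  ChainHom.le_comp_right g.1 h

theorem NegHom.le_comp_left {P Q S : NegObj R} (f : P ⟶ Q) {g g' : Q ⟶ S}
    (h : NegHom.le g g') : NegHom.le (f ≫ g) (f ≫ g') :=
  ChainHom.le_comp_left f.1 h

/-- Identity-reflectingness of a chain. -/
def NegObj.IdRefl (P : NegObj R) : Prop :=
  ∀ {i j : Fin (P.n + 1)} (h : i ≤ j), IsIdMor (P.X.map (homOfLE h)) → i = j

/-- Objects of `∫N^{--,+}_+(C)`: identity-reflecting chains in `C₋`. -/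
structure StrictObj (R : ReedyStruct C) where
  toNegObj : NegObj R
  idRefl : toNegObj.IdRefl

/-- Morphisms of `∫N^{--,+}_+(C)`: morphisms of `∫N^{-,+}(C)` with `α` injective. -/
def StrictHomT (P Q : StrictObj R) : Type v :=
  { f : P.toNegObj ⟶ Q.toNegObj // Function.Injective f.1.α }

def StrictHomT.id (P : StrictObj R) : StrictHomT P P :=
  ⟨𝟙 P.toNegObj, fun _ _ h => h⟩

def StrictHomT.comp {P Q S : StrictObj R} (f : StrictHomT P Q) (g : StrictHomT Q S) :
    StrictHomT P S :=
  ⟨f.1 ≫ g.1, fun _ _ h => f.2 (g.2 h)⟩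

/-- The category `∫N^{--,+}_+(C)`. -/
instance : Category (StrictObj R) where
  Hom := StrictHomT
  id := StrictHomT.id
  comp := StrictHomT.comp
  id_comp f := Subtype.ext (Category.id_comp f.1)
  comp_id f := Subtype.ext (Category.comp_id f.1)
  assoc f g h := Subtype.ext (Category.assoc f.1 g.1 h.1)

/-- The order on the hom-sets of `∫N^{--,+}_+(C)`. -/
def StrictHom.le {P Q : StrictObj R} (f g : P ⟶ Q) : Prop := NegHom.le f.1 g.1

/-- The equivalence relation `∼` on the hom-sets of `∫N^{--,+}_+(C)`. -/
def StrictHom.equiv {P Q : StrictObj R} (f g : P ⟶ Q) : Prop :=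
  Relation.EqvGen (fun a b : P ⟶ Q => StrictHom.le a b) f g

theorem StrictHom.le_comp_right {P Q S : StrictObj R} {f f' : P ⟶ Q} (g : Q ⟶ S)
    (h : StrictHom.le f f') : StrictHom.le (f ≫ g) (f' ≫ g) :=
  NegHom.le_comp_right g.1 h

theorem StrictHom.le_comp_left {P Q S : StrictObj R} (f : P ⟶ Q) {g g' : Q ⟶ S}
    (h : StrictHom.le g g') : StrictHom.le (f ≫ g) (f ≫ g') :=
  NegHom.le_comp_left f.1 h

/-- Objects of `Down_*(C)`: the same as those of `∫N^{-,+}(C)`. -/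
structure DownStar (R : ReedyStruct C) where
  obj : NegObj R

/-- The category `Down_*(C)`: hom-sets are the quotients of those of `∫N^{-,+}(C)`
by the symmetric-transitive closure of `≤`. -/
instance : Category (DownStar R) where
  Hom P Q := Quot (fun f g : P.obj ⟶ Q.obj => NegHom.le f g)
  id P := Quot.mk _ (𝟙 P.obj)
  comp {P Q S} f g :=
    Quot.lift
      (fun f' => Quot.lift (fun g' => Quot.mk _ (f' ≫ g'))
        (fun _ _ hg => Quot.sound (NegHom.le_comp_left f' hg)) g)
      (fun f₁ f₂ hf => Quot.inductionOn g (fun g' =>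
        Quot.sound (NegHom.le_comp_right g' hf))) f
  id_comp f := Quot.inductionOn f fun f' => congrArg (Quot.mk _) (Category.id_comp f')
  comp_id f := Quot.inductionOn f fun f' => congrArg (Quot.mk _) (Category.comp_id f')
  assoc f g h :=
    Quot.inductionOn f fun f' => Quot.inductionOn g fun g' => Quot.inductionOn h fun h' =>
      congrArg (Quot.mk _) (Category.assoc f' g' h')

/-- Objects of `Down(C)`: the same as those of `∫N^{--,+}_+(C)`. -/
structure Down (R : ReedyStruct C) where
  obj : StrictObj R

/-- The category `Down(C)`: hom-sets are the quotients of those of `∫N^{--,+}_+(C)`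
by the symmetric-transitive closure of `≤`. -/
instance : Category (Down R) where
  Hom P Q := Quot (fun f g : P.obj ⟶ Q.obj => StrictHom.le f g)
  id P := Quot.mk _ (𝟙 P.obj)
  comp {P Q S} f g :=
    Quot.lift
      (fun f' => Quot.lift (fun g' => Quot.mk _ (f' ≫ g'))
        (fun _ _ hg => Quot.sound (StrictHom.le_comp_left f' hg)) g)
      (fun f₁ f₂ hf => Quot.inductionOn g (fun g' =>
        Quot.sound (StrictHom.le_comp_right g' hf))) f
  id_comp f := Quot.inductionOn f fun f' => congrArg (Quot.mk _) (Category.id_comp f')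
  comp_id f := Quot.inductionOn f fun f' => congrArg (Quot.mk _) (Category.comp_id f')
  assoc f g h :=
    Quot.inductionOn f fun f' => Quot.inductionOn g fun g' => Quot.inductionOn h fun h' =>
      congrArg (Quot.mk _) (Category.assoc f' g' h')

/-- The quotient functor `∫N^{-,+}(C) → Down_*(C)`. -/
def qStar (R : ReedyStruct C) : NegObj R ⥤ DownStar R where
  obj P := ⟨P⟩
  map f := Quot.mk _ f
  map_id _ := rfl
  map_comp _ _ := rfl

/-- The inclusion functor `Down(C) → Down_*(C)`. -/
def downInclusion (R : ReedyStruct C) : Down R ⥤ DownStar R where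
  obj P := ⟨P.obj.toNegObj⟩
  map {P Q} f :=
    Quot.lift (fun f' : P.obj ⟶ Q.obj => Quot.mk _ f'.1) (fun _ _ h => Quot.sound h) f
  map_id _ := rfl
  map_comp {P Q S} f g := by
    induction f using Quot.ind
    induction g using Quot.ind
    rfl

/-- The last-component functor `∫N(C) → C`. -/
def lastChain : ChainObj C ⥤ C where
  obj P := P.X.obj (Fin.last P.n)
  map {P Q} f := f.θ (Fin.last P.n) ≫ Q.X.map (homOfLE (Fin.le_last (f.α (Fin.last P.n))))
  map_id P := by
    show 𝟙 (P.X.obj (Fin.last P.n)) ≫ P.X.map (homOfLE (Fin.le_last (Fin.last P.n))) = 𝟙 _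
    rw [Category.id_comp]
    exact P.X.map_id _
  map_comp {P Q S} f g := by
    show (f.θ (Fin.last P.n) ≫ g.θ (f.α (Fin.last P.n))) ≫
        S.X.map (homOfLE (Fin.le_last (g.α (f.α (Fin.last P.n))))) =
      (f.θ (Fin.last P.n) ≫ Q.X.map (homOfLE (Fin.le_last (f.α (Fin.last P.n))))) ≫
        g.θ (Fin.last Q.n) ≫ S.X.map (homOfLE (Fin.le_last (g.α (Fin.last Q.n))))
    rw [Category.assoc, Category.assoc, ← Category.assoc (Q.X.map _),
      g.natural (Fin.le_last (f.α (Fin.last P.n))), Category.assoc, ← Functor.map_comp,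
      homOfLE_comp]

theorem lastChain_eq_of_le {P Q : ChainObj C} {f g : P ⟶ Q} (h : ChainHom.le f g) :
    lastChain.map f = lastChain.map g := by
  show f.θ (Fin.last P.n) ≫ Q.X.map (homOfLE (Fin.le_last (f.α (Fin.last P.n)))) =
    g.θ (Fin.last P.n) ≫ Q.X.map (homOfLE (Fin.le_last (g.α (Fin.last P.n))))
  rw [h.2 (Fin.last P.n) (h.1 (Fin.last P.n)), Category.assoc, ← Functor.map_comp,
    homOfLE_comp]

/-- The forgetful functor `∫N^{-,+}(C) → ∫N(C)`. -/
def negForget (R : ReedyStruct C) : NegObj R ⥤ ChainObj C where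
  obj P := P.chain
  map f := f.1
  map_id _ := rfl
  map_comp _ _ := rfl

/-- The last-component functor `∫N^{-,+}(C) → C`. -/
def lastNeg (R : ReedyStruct C) : NegObj R ⥤ C := negForget R ⋙ lastChain

/-- The forgetful functor `∫N^{--,+}_+(C) → ∫N^{-,+}(C)`. -/
def strictForget (R : ReedyStruct C) : StrictObj R ⥤ NegObj R where
  obj P := P.toNegObj
  map f := f.1
  map_id _ := rfl
  map_comp _ _ := rfl

/-- The last-component functor `∫N^{--,+}_+(C) → C`. -/
def lastStrict (R : ReedyStruct C) : StrictObj R ⥤ C := strictForget R ⋙ lastNeg R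

/-- The last-component functor `Down_*(C) → C`. -/
def lastDownStar (R : ReedyStruct C) : DownStar R ⥤ C where
  obj P := (lastNeg R).obj P.obj
  map {P Q} f :=
    Quot.lift (fun f' : P.obj ⟶ Q.obj => (lastNeg R).map f')
      (fun _ _ h => lastChain_eq_of_le h) f
  map_id P := (lastNeg R).map_id P.obj
  map_comp {P Q S} f g := by
    induction f using Quot.ind
    induction g using Quot.ind
    exact (lastNeg R).map_comp _ _

/-- The last-component functor `Down(C) → C`. -/
def lastDown (R : ReedyStruct C) : Down R ⥤ C where
  obj P := (lastStrict R).obj P.obj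
  map {P Q} f :=
    Quot.lift (fun f' : P.obj ⟶ Q.obj => (lastStrict R).map f')
      (fun _ _ h => lastChain_eq_of_le h) f
  map_id P := (lastStrict R).map_id P.obj
  map_comp {P Q S} f g := by
    induction f using Quot.ind
    induction g using Quot.ind
    exact (lastStrict R).map_comp _ _

/-- The wide subcategory `Γ₋` of `∫N^{-,+}(C)`: morphisms of the form
`(σ, id) : ([m], X ∘ σ) → ([n], X)` with `σ` surjective, i.e. morphisms whose simplicial
component is surjective and all of whose components are identities. -/
def GammaNeg (R : ReedyStruct C) {P Q : NegObj R} (f : P ⟶ Q) : Prop :=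
  Function.Surjective f.1.α ∧ ∀ i, IsIdMor (f.1.θ i)

/-- The wide subcategory `Γ₊` of `∫N^{-,+}(C)`: morphisms `(δ, θ)` with `δ` injective. -/
def GammaPos (R : ReedyStruct C) {P Q : NegObj R} (f : P ⟶ Q) : Prop :=
  Function.Injective f.1.α

/-- Whiskering (precomposition) with `lastF` is bijective on natural transformations
between functors out of `C`. -/
def WhiskerUnique {Γ : Type u₁} [Category.{v₁} Γ] (lastF : Γ ⥤ C) : Prop :=
  ∀ {D : Type u₂} [Category.{v₂} D] (F G : C ⥤ D)
    (ε : lastF ⋙ F ⟶ lastF ⋙ G), ∃! ε' : F ⟶ G, Functor.whiskerLeft lastF ε' = ε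

/-- `lastF : Γ ⥤ C` is a weak 1-localization of `Γ` at the `last`-weak equivalences
(the morphisms sent by `lastF` to identities). -/
def IsWeakLocalizationAtLastWeq {Γ : Type u₁} [Category.{v₁} Γ] (lastF : Γ ⥤ C) : Prop :=
  (∀ {P Q : Γ} (f : P ⟶ Q), IsIdMor (lastF.map f) → IsIso (lastF.map f)) ∧
  (∀ {E : Type u₂} [Category.{v₂} E] (G : Γ ⥤ E),
    (∀ {P Q : Γ} (f : P ⟶ Q), IsIdMor (lastF.map f) → IsIso (G.map f)) →
    ∃ H : C ⥤ E, Nonempty (lastF ⋙ H ≅ G)) ∧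
  (∀ {E : Type u₂} [Category.{v₂} E] (H H' : C ⥤ E) (θ : lastF ⋙ H ≅ lastF ⋙ H'),
    ∃! θ' : H ≅ H', Functor.isoWhiskerLeft lastF θ' = θ)

/-! ### Auxiliary lemmas -/

section Aux

theorem map_homOfLE_self {n : ℕ} (X : Fin (n + 1) ⥤ C) {i : Fin (n + 1)} (h : i ≤ i) :
    X.map (homOfLE h) = 𝟙 _ := by
  have : homOfLE h = 𝟙 i := rfl
  rw [this, X.map_id]

theorem map_homOfLE_isid {n : ℕ} (X : Fin (n + 1) ⥤ C) {i j : Fin (n + 1)} (h : i ≤ j)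
    (e : i = j) : X.map (homOfLE h) = eqToHom (congrArg X.obj e) := by
  subst e; simp [map_homOfLE_self]

theorem IsIdMor.id (x : C) : IsIdMor (𝟙 x) := ⟨rfl, by simp⟩

theorem IsIdMor.eqToHom {x y : C} (e : x = y) : IsIdMor (eqToHom e) := ⟨e, rfl⟩

theorem isIdMor_comp {x y z : C} {f : x ⟶ y} {g : y ⟶ z} (hf : IsIdMor f) (hg : IsIdMor g) :
    IsIdMor (f ≫ g) := by
  obtain ⟨e, rfl⟩ := hf; obtain ⟨e', rfl⟩ := hg
  exact ⟨e.trans e', by simp⟩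

theorem ChainHom.ext2 {P Q : ChainObj C} {f g : ChainHom P Q}
    (hα : ∀ i, f.α i = g.α i)
    (hθ : ∀ i, f.θ i ≫ eqToHom (congrArg Q.X.obj (hα i)) = g.θ i) : f = g := by
  obtain ⟨fα, fθ, hf⟩ := f
  obtain ⟨gα, gθ, hg⟩ := g
  have h1 : fα = gα := OrderHom.ext _ _ (funext hα)
  subst h1
  refine ChainHom.ext' rfl (heq_of_eq (funext fun i => ?_))
  rw [← hθ i]
  simp

theorem map_id_cancel {D : Type*} {E : Type*} [Category D] [Category E] (F G : D ⥤ E)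
    {x : D} (a b : F.obj x ⟶ G.obj x) (h : a ≫ G.map (𝟙 x) = F.map (𝟙 x) ≫ b) : a = b := by
  simpa using h

theorem comp_eqToHom_eqToHom_self {X Y Z : C} (f : X ⟶ Y) (p : Y = Z) (q : Z = Y) :
    f ≫ eqToHom p ≫ eqToHom q = f := by
  simp

theorem nat_aux {E' : Type*} [Category E'] {a b c d e t : E'} (p : a ⟶ b) (u : b ⟶ c)
    (v : d ⟶ c) [hv : IsIso v] (w : c ⟶ t) (x : a ⟶ e) (y : e ⟶ t)
    (h : p ≫ u ≫ w = x ≫ y) : (p ≫ u ≫ inv v) ≫ v ≫ w = x ≫ y := by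
  simp only [Category.assoc, IsIso.inv_hom_id_assoc]
  exact h

end Aux

/-! ### The master lemma -/

section Master

/-- Abstract criterion for the weak localization property. -/
theorem isWeakLocalization_of {Γ : Type u₁} [Category.{v₁} Γ] (lastF : Γ ⥤ C)
    (P1 : ∀ {E : Type u₂} [Category.{v₂} E] (F G : C ⥤ E) (ε : lastF ⋙ F ⟶ lastF ⋙ G),
      ∃! δ : F ⟶ G, Functor.whiskerLeft lastF δ = ε)
    (P2 : ∀ {E : Type u₂} [Category.{v₂} E] (G : Γ ⥤ E),
      (∀ {P Q : Γ} (f : P ⟶ Q), IsIdMor (lastF.map f) → IsIso (G.map f)) →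
      ∃ H : C ⥤ E, Nonempty (lastF ⋙ H ≅ G)) :
    IsWeakLocalizationAtLastWeq.{v₂, u₂} lastF := by
  refine ⟨fun f hf => ?_, fun G hG => P2 G hG, ?_⟩
  · obtain ⟨e, he⟩ := hf; rw [he]; infer_instance
  · intro E _ H H' θ
    obtain ⟨δ, hδ, hδu⟩ := P1 H H' θ.hom
    obtain ⟨δ', hδ', hδ'u⟩ := P1 H' H θ.inv
    have h1 : δ ≫ δ' = 𝟙 H := by
      obtain ⟨ι, hι, hιu⟩ := P1 H H (𝟙 (lastF ⋙ H))
      have e1 : δ ≫ δ' = ι := hιu (δ ≫ δ') (by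
        ext P
        have a1 := congr_app hδ P
        have a2 := congr_app hδ' P
        simp only [Functor.whiskerLeft_app] at a1 a2 ⊢
        rw [NatTrans.comp_app, a1, a2]
        simp)
      have e2 : 𝟙 H = ι := hιu (𝟙 H) (by ext P; simp)
      rw [e1, ← e2]
    have h2 : δ' ≫ δ = 𝟙 H' := by
      obtain ⟨ι, hι, hιu⟩ := P1 H' H' (𝟙 (lastF ⋙ H'))
      have e1 : δ' ≫ δ = ι := hιu (δ' ≫ δ) (by
        ext P
        have a1 := congr_app hδ P
        have a2 := congr_app hδ' P
        simp only [Functor.whiskerLeft_app] at a1 a2 ⊢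
        rw [NatTrans.comp_app, a2, a1]
        simp)
      have e2 : 𝟙 H' = ι := hιu (𝟙 H') (by ext P; simp)
      rw [e1, ← e2]
    refine ⟨⟨δ, δ', h1, h2⟩, Iso.ext hδ, ?_⟩
    intro θ'' h''
    apply Iso.ext
    exact hδu θ''.hom (by rw [← h'']; rfl)

end Master
/-! ### The case of `∫N(C)` -/

section ChainLayer

/-- The one-object chain on `c`. -/
def cPt (c : C) : ChainObj C := ⟨0, (Functor.const _).obj c⟩

/-- The morphism of one-object chains induced by `f`. -/
def cP {x y : C} (f : x ⟶ y) : cPt x ⟶ cPt y :=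
  ⟨OrderHom.id, fun _ => f, fun _ => by show 𝟙 x ≫ f = f ≫ 𝟙 y; simp⟩

/-- The section of `lastChain`. -/
def sChain : C ⥤ ChainObj C where
  obj := cPt
  map := cP
  map_id x := ChainHom.ext2 (fun _ => rfl) (fun i => by
    show 𝟙 x ≫ eqToHom _ = 𝟙 x; simp)
  map_comp f g := ChainHom.ext2 (fun _ => rfl) (fun i => by
    show _ ≫ eqToHom _ = _ ≫ _; exact Category.comp_id _)

/-- The inclusion of the last vertex. -/
def cEta (P : ChainObj C) : cPt (P.X.obj (Fin.last P.n)) ⟶ P :=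
  ⟨OrderHom.const _ (Fin.last P.n), fun _ => 𝟙 _, fun {i j} h => by
    show 𝟙 _ ≫ 𝟙 _ = 𝟙 _ ≫ P.X.map (homOfLE _)
    exact (Category.id_comp _).trans (((map_homOfLE_self P.X _).symm).trans (Category.id_comp _).symm)⟩

theorem lastChain_map_cP {x y : C} (f : x ⟶ y) : lastChain.map (cP f) = f := by
  show f ≫ 𝟙 y = f; simp

theorem lastChain_map_cEta (P : ChainObj C) : lastChain.map (cEta P) = 𝟙 _ := by
  show 𝟙 _ ≫ P.X.map (homOfLE _) = 𝟙 _
  exact (Category.id_comp _).trans (map_homOfLE_self P.X _)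

theorem isIdMor_lastChain_cEta (P : ChainObj C) : IsIdMor (lastChain.map (cEta P)) :=
  ⟨rfl, lastChain_map_cEta P⟩

/-- The collapse onto the last vertex. -/
def cKappa (Q : ChainObj C) : Q ⟶ cPt (Q.X.obj (Fin.last Q.n)) :=
  ⟨OrderHom.const _ 0, fun i => Q.X.map (homOfLE (Fin.le_last i)), fun {i j} h => by
    show Q.X.map (homOfLE h) ≫ Q.X.map (homOfLE (Fin.le_last j)) =
      Q.X.map (homOfLE (Fin.le_last i)) ≫ 𝟙 _
    rw [← Q.X.map_comp, homOfLE_comp, Category.comp_id]⟩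

theorem isIdMor_lastChain_cKappa (Q : ChainObj C) : IsIdMor (lastChain.map (cKappa Q)) := by
  refine ⟨rfl, ?_⟩
  show Q.X.map (homOfLE (Fin.le_last (Fin.last Q.n))) ≫ 𝟙 _ = _
  rw [map_homOfLE_self]
  simp
  rfl

theorem chain_map_eq_of_le {E : Type u₂} [Category.{v₂} E] (G : ChainObj C ⥤ E)
    (hG : ∀ {P Q : ChainObj C} (f : P ⟶ Q), IsIdMor (lastChain.map f) → IsIso (G.map f))
    {P Q : ChainObj C} {a b : P ⟶ Q} (h : ChainHom.le a b) : G.map a = G.map b := by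
  have hc : a ≫ cKappa Q = b ≫ cKappa Q := by
    refine ChainHom.ext2 (fun i => rfl) (fun i => ?_)
    show (a.θ i ≫ Q.X.map (homOfLE (Fin.le_last (a.α i)))) ≫ eqToHom _ =
      b.θ i ≫ Q.X.map (homOfLE (Fin.le_last (b.α i)))
    rw [h.2 i (h.1 i), Category.assoc, Category.assoc, ← Q.X.map_comp, homOfLE_comp]
    simp
  haveI := hG (cKappa Q) (isIdMor_lastChain_cKappa Q)
  have h2 := congrArg G.map hc
  rw [G.map_comp, G.map_comp] at h2
  exact (cancel_mono (G.map (cKappa Q))).1 h2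

theorem chain_le_eta {P Q : ChainObj C} (f : P ⟶ Q) :
    ChainHom.le (cEta P ≫ f) (cP (lastChain.map f) ≫ cEta Q) := by
  constructor
  · intro i; exact Fin.le_last _
  · intro i hi
    show lastChain.map f ≫ 𝟙 _ = (𝟙 _ ≫ f.θ (Fin.last P.n)) ≫ Q.X.map (homOfLE hi)
    show (f.θ (Fin.last P.n) ≫ Q.X.map (homOfLE _)) ≫ 𝟙 _ = _
    simp
    rfl

theorem chainP2 {E : Type u₂} [Category.{v₂} E] (G : ChainObj C ⥤ E)
    (hG : ∀ {P Q : ChainObj C} (f : P ⟶ Q), IsIdMor (lastChain.map f) → IsIso (G.map f)) :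
    ∃ H : C ⥤ E, Nonempty (lastChain ⋙ H ≅ G) := by
  refine ⟨sChain ⋙ G, ⟨NatIso.ofComponents
    (fun P => @asIso _ _ _ _ _ (hG (cEta P) (isIdMor_lastChain_cEta P))) ?_⟩⟩
  intro P Q f
  show G.map (cP (lastChain.map f)) ≫ G.map (cEta Q) = G.map (cEta P) ≫ G.map f
  exact (G.map_comp _ _).symm.trans ((chain_map_eq_of_le G hG (chain_le_eta f)).symm.trans
    (G.map_comp _ _))

theorem chainP1 {E : Type u₂} [Category.{v₂} E] (F G : C ⥤ E)
    (ε : lastChain ⋙ F ⟶ lastChain ⋙ G) :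
    ∃! δ : F ⟶ G, Functor.whiskerLeft (lastChain (C := C)) δ = ε := by
  have hfix : ∀ P : ChainObj C, ε.app (cPt (P.X.obj (Fin.last P.n))) = ε.app P := by
    intro P
    have h := ε.naturality (cEta P)
    dsimp at h
    rw [lastChain_map_cEta] at h
    exact map_id_cancel F G _ _ h.symm
  have hnat : ∀ ⦃c c' : C⦄ (f : c ⟶ c'),
      F.map f ≫ ε.app (cPt c') = ε.app (cPt c) ≫ G.map f := by
    intro c c' f
    have h := ε.naturality (cP f)
    dsimp at h
    rw [lastChain_map_cP] at h
    exact h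
  refine ⟨⟨fun c => ε.app (cPt c), hnat⟩, ?_, ?_⟩
  · ext P
    exact hfix P
  · intro δ' h'
    ext c
    exact congr_app h' (cPt c)

theorem loc_chain : IsWeakLocalizationAtLastWeq.{v₂, u₂} (lastChain (C := C)) :=
  isWeakLocalization_of _ chainP1 chainP2

end ChainLayer
/-! ### The case of `∫N^{-,+}(C)`: basic constructions -/

section NegLayer

variable {R : ReedyStruct C}

theorem ReedyStruct.pos_eqToHom (R : ReedyStruct C) {x y : C} (e : x = y) :
    R.pos (eqToHom e) := by subst e; simpa using R.pos_id x

theorem ReedyStruct.neg_eqToHom (R : ReedyStruct C) {x y : C} (e : x = y) :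
    R.neg (eqToHom e) := by subst e; simpa using R.neg_id x

theorem NegHom.ext2 {P Q : NegObj R} {f g : P ⟶ Q}
    (hα : ∀ i, f.1.α i = g.1.α i)
    (hθ : ∀ i, f.1.θ i ≫ eqToHom (congrArg Q.X.obj (hα i)) = g.1.θ i) : f = g :=
  Subtype.ext (ChainHom.ext2 hα hθ)

/-- Constructor for morphisms of `∫N^{-,+}(C)` whose components are `eqToHom`s. -/
def negMk {P Q : NegObj R} (α : Fin (P.n + 1) →o Fin (Q.n + 1))
    (hobj : ∀ i, P.X.obj i = Q.X.obj (α i))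
    (hnat : ∀ {i j : Fin (P.n + 1)} (h : i ≤ j),
      P.X.map (homOfLE h) ≫ eqToHom (hobj j) =
        eqToHom (hobj i) ≫ Q.X.map (homOfLE (α.monotone h))) : P ⟶ Q :=
  ⟨⟨α, fun i => eqToHom (hobj i), hnat⟩, fun i => R.pos_eqToHom (hobj i)⟩

/-- The one-object chain. -/
def negPt (R : ReedyStruct C) (c : C) : NegObj R :=
  ⟨0, (Functor.const _).obj c, fun {_ _} _ => R.neg_id c⟩

/-- The inclusion of the `i0`-th vertex. -/
def negIota (P : NegObj R) (i0 : Fin (P.n + 1)) : negPt R (P.X.obj i0) ⟶ P :=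
  negMk (OrderHom.const _ i0) (fun _ => rfl) (fun {i j} h => by
    show 𝟙 _ ≫ eqToHom _ = eqToHom _ ≫ P.X.map (homOfLE _)
    exact (Category.id_comp _).trans (((map_homOfLE_self P.X _).symm).trans (Category.id_comp _).symm))

/-- The inclusion of the last vertex. -/
def negEta (P : NegObj R) : negPt R (P.X.obj (Fin.last P.n)) ⟶ P := negIota P (Fin.last P.n)

/-- The morphism of one-object chains induced by a positive morphism. -/
def negP {x y : C} (h : x ⟶ y) (hp : R.pos h) : negPt R x ⟶ negPt R y :=
  ⟨⟨OrderHom.id, fun _ => h, fun _ => by show 𝟙 x ≫ h = h ≫ 𝟙 y; simp⟩, fun _ => hp⟩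

theorem negP_id (x : C) : negP (𝟙 x) (R.pos_id x) = 𝟙 (negPt R x) :=
  NegHom.ext2 (fun _ => rfl) (fun i => by show 𝟙 x ≫ eqToHom _ = 𝟙 x; simp)

theorem negP_comp {x y z : C} (h : x ⟶ y) (hp : R.pos h) (h' : y ⟶ z) (hp' : R.pos h') :
    negP (h ≫ h') (R.pos_comp _ _ hp hp') = negP h hp ≫ negP h' hp' :=
  NegHom.ext2 (fun _ => rfl) (fun i => by show _ ≫ eqToHom _ = _ ≫ _; exact Category.comp_id _)

/-- The two-object chain on a negative morphism. -/
def negW {x z : C} (g : x ⟶ z) (hg : R.neg g) : NegObj R :=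
  ⟨1, ComposableArrows.mk₁ g, by
    intro i j h
    fin_cases i <;> fin_cases j
    · exact R.neg_id _
    · exact hg
    · exact absurd h (by decide)
    · exact R.neg_id _⟩

def negU {x z : C} (g : x ⟶ z) (hg : R.neg g) : negPt R x ⟶ negW g hg :=
  negIota (negW g hg) 0

def negV {x z : C} (g : x ⟶ z) (hg : R.neg g) : negPt R z ⟶ negW g hg :=
  negIota (negW g hg) 1

theorem lastNeg_map_negP {x y : C} (h : x ⟶ y) (hp : R.pos h) :
    (lastNeg R).map (negP h hp) = h := by
  show h ≫ 𝟙 y = h; simp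

theorem lastNeg_map_negIota (P : NegObj R) (i0 : Fin (P.n + 1)) :
    (lastNeg R).map (negIota P i0) = eqToHom rfl ≫ P.X.map (homOfLE (Fin.le_last i0)) := rfl

theorem lastNeg_map_negEta (P : NegObj R) : (lastNeg R).map (negEta P) = 𝟙 _ := by
  show (lastNeg R).map (negIota P (Fin.last P.n)) = _
  rw [lastNeg_map_negIota, map_homOfLE_self]
  simp
  rfl

theorem isIdMor_negEta (P : NegObj R) : IsIdMor ((lastNeg R).map (negEta P)) :=
  ⟨rfl, lastNeg_map_negEta P⟩

theorem lastNeg_map_negU {x z : C} (g : x ⟶ z) (hg : R.neg g) :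
    (lastNeg R).map (negU g hg) = g := by
  show (lastNeg R).map (negIota (negW g hg) 0) = g
  rw [lastNeg_map_negIota]
  simp only [eqToHom_refl, Category.id_comp]
  rfl

theorem lastNeg_map_negV {x z : C} (g : x ⟶ z) (hg : R.neg g) :
    (lastNeg R).map (negV g hg) = eqToHom rfl := by
  show (lastNeg R).map (negIota (negW g hg) 1) = _
  rw [lastNeg_map_negIota]
  simp only [eqToHom_refl, Category.id_comp]
  rfl

theorem isIdMor_negV {x z : C} (g : x ⟶ z) (hg : R.neg g) :
    IsIdMor ((lastNeg R).map (negV g hg)) :=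
  ⟨rfl, lastNeg_map_negV g hg⟩

theorem negP1 {E : Type u₂} [Category.{v₂} E] (F G : C ⥤ E)
    (ε : lastNeg R ⋙ F ⟶ lastNeg R ⋙ G) :
    ∃! δ : F ⟶ G, Functor.whiskerLeft (lastNeg R) δ = ε := by
  have hfix : ∀ P : NegObj R, ε.app (negPt R (P.X.obj (Fin.last P.n))) = ε.app P := by
    intro P
    have h := ε.naturality (negEta P)
    dsimp at h
    rw [lastNeg_map_negEta] at h
    exact map_id_cancel F G _ _ h.symm
  have hnat : ∀ ⦃c c' : C⦄ (f : c ⟶ c'),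
      F.map f ≫ ε.app (negPt R c') = ε.app (negPt R c) ≫ G.map f := by
    intro c c' f
    obtain ⟨⟨z, g, h⟩, ⟨hg, hh, he⟩, -⟩ := R.factor_existsUnique f
    dsimp only at he
    have hWpt : ε.app (negW g hg) = ε.app (negPt R z) := by
      have h1 := ε.naturality (negV g hg)
      dsimp at h1
      rw [lastNeg_map_negV] at h1
      exact (map_id_cancel F G _ _ h1.symm).symm
    have hups : F.map g ≫ ε.app (negPt R z) = ε.app (negPt R c) ≫ G.map g := by
      have h1 := ε.naturality (negU g hg)
      dsimp at h1
      rw [lastNeg_map_negU] at h1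
      rw [← hWpt]
      exact h1
    have hp : F.map h ≫ ε.app (negPt R c') = ε.app (negPt R z) ≫ G.map h := by
      have h1 := ε.naturality (negP h hh)
      dsimp at h1
      rw [lastNeg_map_negP] at h1
      exact h1
    erw [← he, F.map_comp, G.map_comp, Category.assoc, hp, ← Category.assoc, hups,
      Category.assoc]
    rfl
  refine ⟨⟨fun c => ε.app (negPt R c), hnat⟩, ?_, ?_⟩
  · ext P
    exact hfix P
  · intro δ' h'
    ext c
    exact congr_app h' (negPt R c)

end NegLayer
/-! ### The case of `∫N^{-,+}(C)`: the functor `H` -/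

section NegH

variable {R : ReedyStruct C}

@[simp] theorem negComp_α {P Q S : NegObj R} (f : P ⟶ Q) (g : Q ⟶ S) (i) :
    (f ≫ g).1.α i = g.1.α (f.1.α i) := rfl

@[simp] theorem negComp_θ {P Q S : NegObj R} (f : P ⟶ Q) (g : Q ⟶ S) (i) :
    (f ≫ g).1.θ i = f.1.θ i ≫ g.1.θ (f.1.α i) := rfl

@[simp] theorem negId_α (P : NegObj R) (i) : (𝟙 P : P ⟶ P).1.α i = i := rfl

@[simp] theorem negId_θ (P : NegObj R) (i) : (𝟙 P : P ⟶ P).1.θ i = 𝟙 (P.X.obj i) := rfl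

@[simp] theorem negMk_α {P Q : NegObj R} (α) (hobj) (hnat) (i) :
    (negMk (P := P) (Q := Q) α hobj hnat).1.α i = α i := rfl

@[simp] theorem negMk_θ {P Q : NegObj R} (α) (hobj) (hnat) (i) :
    (negMk (P := P) (Q := Q) α hobj hnat).1.θ i = eqToHom (hobj i) := rfl

@[simp] theorem negP_α {x y : C} (h : x ⟶ y) (hp : R.pos h) (i) :
    (negP h hp).1.α i = i := rfl

@[simp] theorem negP_θ {x y : C} (h : x ⟶ y) (hp : R.pos h) (i) :
    (negP h hp).1.θ i = h := rfl

/-- Composition of `negMk` morphisms. -/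
theorem negMk_comp_eq {P Q S : NegObj R} {α : Fin (P.n + 1) →o Fin (Q.n + 1)}
    {hobj : ∀ i, P.X.obj i = Q.X.obj (α i)} {hnat}
    {β : Fin (Q.n + 1) →o Fin (S.n + 1)} {hobj' : ∀ i, Q.X.obj i = S.X.obj (β i)} {hnat'}
    {γ : Fin (P.n + 1) →o Fin (S.n + 1)} {hobj'' : ∀ i, P.X.obj i = S.X.obj (γ i)} {hnat''}
    (hα : ∀ i, β (α i) = γ i) :
    negMk α hobj hnat ≫ negMk β hobj' hnat' = negMk γ hobj'' hnat'' := by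
  refine NegHom.ext2 (fun i => hα i) (fun i => ?_)
  show (eqToHom (hobj i) ≫ eqToHom (hobj' (α i))) ≫ eqToHom _ = eqToHom (hobj'' i)
  simp
  exact eqToHom_trans _ _

theorem negMk_eq_id {P : NegObj R} {α} {hobj : ∀ i, P.X.obj i = P.X.obj (α i)} {hnat}
    (hα : ∀ i, α i = i) :
    negMk (P := P) (Q := P) α hobj hnat = 𝟙 P := by
  refine NegHom.ext2 (fun i => hα i) (fun i => ?_)
  show eqToHom (hobj i) ≫ eqToHom _ = 𝟙 _
  exact (eqToHom_trans _ _).trans (eqToHom_refl _ _)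

theorem negPt_nat (x : C) (α : Fin 1 →o Fin 1)
    (hobj : ∀ i, (negPt R x).X.obj i = (negPt R x).X.obj (α i)) :
    ∀ {i j : Fin ((negPt R x).n + 1)} (h : i ≤ j),
      (negPt R x).X.map (homOfLE h) ≫ eqToHom (hobj j) =
        eqToHom (hobj i) ≫ (negPt R x).X.map (homOfLE (α.monotone h)) := by
  intro i j h
  show 𝟙 x ≫ eqToHom _ = eqToHom _ ≫ 𝟙 x
  simp
  exact (eqToHom_refl _ _).symm

theorem isIdMor_lastNeg_negMk {P Q : NegObj R} (α) (hobj) (hnat)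
    (hlast : α (Fin.last P.n) = Fin.last Q.n) :
    IsIdMor ((lastNeg R).map (negMk α hobj hnat)) := by
  refine ⟨(hobj (Fin.last P.n)).trans (congrArg Q.X.obj hlast), ?_⟩
  show eqToHom (hobj (Fin.last P.n)) ≫ Q.X.map (homOfLE _) = _
  exact (congrArg (fun k => eqToHom (hobj (Fin.last P.n)) ≫ k)
    (map_homOfLE_isid Q.X (Fin.le_last _) hlast)).trans (eqToHom_trans _ _)

/-- The retraction of the constant two-object chain. -/
def negRetr (x : C) : negW (𝟙 x) (R.neg_id x) ⟶ negPt R x :=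
  negMk (OrderHom.const _ 0) (fun i => by fin_cases i <;> rfl)
    (fun {i j} h => by
      fin_cases i <;> fin_cases j <;>
        first
          | exact absurd h (Nat.not_succ_le_zero _)
          | exact absurd h (Nat.not_succ_le_self _)
          | exact (Category.comp_id _).trans (Category.id_comp _).symm
          | (simp only [eqToHom_refl, Category.id_comp, Category.comp_id,
              map_homOfLE_self]; rfl)
          | (simp only [eqToHom_refl, Category.id_comp, Category.comp_id,
              map_homOfLE_self]))

theorem isIdMor_negRetr (x : C) : IsIdMor ((lastNeg R).map (negRetr (R := R) x)) :=
  isIdMor_lastNeg_negMk _ _ _ rfl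

theorem negU_retr (x : C) : negU (𝟙 x) (R.neg_id x) ≫ negRetr x = 𝟙 (negPt R x) :=
  Eq.trans
    (negMk_comp_eq (γ := OrderHom.id) (hobj'' := fun _ => rfl)
      (hnat'' := negPt_nat x OrderHom.id (fun _ => rfl))
      (fun i => @Subsingleton.elim (Fin 1) _ _ _))
    (negMk_eq_id (fun _ => rfl))

theorem negV_retr (x : C) : negV (𝟙 x) (R.neg_id x) ≫ negRetr x = 𝟙 (negPt R x) :=
  Eq.trans
    (negMk_comp_eq (γ := OrderHom.id) (hobj'' := fun _ => rfl)
      (hnat'' := negPt_nat x OrderHom.id (fun _ => rfl))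
      (fun i => @Subsingleton.elim (Fin 1) _ _ _))
    (negMk_eq_id (fun _ => rfl))

variable {E : Type u₂} [Category.{v₂} E]

theorem negUV_id (G : NegObj R ⥤ E) (x : C)
    [IsIso (G.map (negV (𝟙 x) (R.neg_id x)))] [IsIso (G.map (negRetr x))] :
    G.map (negU (𝟙 x) (R.neg_id x)) ≫ inv (G.map (negV (𝟙 x) (R.neg_id x))) = 𝟙 _ := by
  have h1 : G.map (negU (𝟙 x) (R.neg_id x)) ≫ G.map (negRetr x) = 𝟙 _ := by
    rw [← G.map_comp, negU_retr, G.map_id]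
  have h2 : G.map (negV (𝟙 x) (R.neg_id x)) ≫ G.map (negRetr x) = 𝟙 _ := by
    rw [← G.map_comp, negV_retr, G.map_id]
  have h3 : G.map (negU (𝟙 x) (R.neg_id x)) = G.map (negV (𝟙 x) (R.neg_id x)) :=
    (cancel_mono (G.map (negRetr x))).1 (h1.trans h2.symm)
  rw [h3]
  simp

/-- The three-object chain. -/
def negT {x z z' : C} (g : x ⟶ z) (g' : z ⟶ z') (hg : R.neg g) (hg' : R.neg g') : NegObj R :=
  ⟨2, ComposableArrows.mk₂ g g', by
    intro i j h
    fin_cases i <;> fin_cases j <;>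
      first
        | exact absurd h (Nat.not_succ_le_zero _)
        | exact absurd h (Nat.not_succ_le_self _)
        | exact R.neg_id _
        | exact hg
        | exact hg'
        | exact R.neg_comp _ _ hg hg'⟩

def negJ1 {x z z' : C} (g : x ⟶ z) (g' : z ⟶ z') (hg : R.neg g) (hg' : R.neg g') :
    negW g hg ⟶ negT g g' hg hg' :=
  negMk ⟨fun i => ⟨i.1, Nat.lt_succ_of_lt i.isLt⟩, fun {a b} h => h⟩
    (fun i => by fin_cases i <;> rfl)
    (fun {i j} h => by
      fin_cases i <;> fin_cases j <;>
        first
          | exact absurd h (Nat.not_succ_le_zero _)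
          | exact absurd h (Nat.not_succ_le_self _)
          | exact (Category.comp_id _).trans (Category.id_comp _).symm
          | (simp only [eqToHom_refl, Category.id_comp, Category.comp_id,
              map_homOfLE_self]; rfl)
          | (simp only [eqToHom_refl, Category.id_comp, Category.comp_id,
              map_homOfLE_self]))

def negJ2 {x z z' : C} (g : x ⟶ z) (g' : z ⟶ z') (hg : R.neg g) (hg' : R.neg g') :
    negW g' hg' ⟶ negT g g' hg hg' :=
  negMk ⟨fun i => ⟨i.1 + 1, Nat.succ_lt_succ i.isLt⟩, fun {a b} h => by
      simp only [Fin.mk_le_mk]; exact Nat.succ_le_succ h⟩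
    (fun i => by fin_cases i <;> rfl)
    (fun {i j} h => by
      fin_cases i <;> fin_cases j <;>
        first
          | exact absurd h (Nat.not_succ_le_zero _)
          | exact absurd h (Nat.not_succ_le_self _)
          | exact (Category.comp_id _).trans (Category.id_comp _).symm
          | (simp only [eqToHom_refl, Category.id_comp, Category.comp_id,
              map_homOfLE_self]; rfl)
          | (simp only [eqToHom_refl, Category.id_comp, Category.comp_id,
              map_homOfLE_self]))

def negJ3 {x z z' : C} (g : x ⟶ z) (g' : z ⟶ z') (hg : R.neg g) (hg' : R.neg g') :
    negW (g ≫ g') (R.neg_comp _ _ hg hg') ⟶ negT g g' hg hg' :=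
  negMk ⟨fun i => ⟨2 * i.1, by
        have h2 : i.1 < 2 := i.isLt
        show 2 * i.1 < 3
        omega⟩, fun {a b} h => by
      simp only [Fin.mk_le_mk]
      have : a.1 ≤ b.1 := h
      omega⟩
    (fun i => by fin_cases i <;> rfl)
    (fun {i j} h => by
      fin_cases i <;> fin_cases j <;>
        first
          | exact absurd h (Nat.not_succ_le_zero _)
          | exact absurd h (Nat.not_succ_le_self _)
          | exact (Category.comp_id _).trans (Category.id_comp _).symm
          | (simp only [eqToHom_refl, Category.id_comp, Category.comp_id,
              map_homOfLE_self]; rfl)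
          | (simp only [eqToHom_refl, Category.id_comp, Category.comp_id,
              map_homOfLE_self]))

theorem isIdMor_negJ2 {x z z' : C} (g : x ⟶ z) (g' : z ⟶ z') (hg hg') :
    IsIdMor ((lastNeg R).map (negJ2 g g' hg hg')) :=
  isIdMor_lastNeg_negMk _ _ _ rfl

theorem isIdMor_negJ3 {x z z' : C} (g : x ⟶ z) (g' : z ⟶ z') (hg hg') :
    IsIdMor ((lastNeg R).map (negJ3 g g' hg hg')) :=
  isIdMor_lastNeg_negMk _ _ _ rfl

section Rels

variable {x z z' : C} (g : x ⟶ z) (g' : z ⟶ z') (hg : R.neg g) (hg' : R.neg g')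

theorem rel1 : negU g hg ≫ negJ1 g g' hg hg' =
    negIota (negT g g' hg hg') 0 := negMk_comp_eq (fun i => rfl)

theorem rel2 : negV g hg ≫ negJ1 g g' hg hg' =
    negIota (negT g g' hg hg') 1 := negMk_comp_eq (fun i => rfl)

theorem rel3 : negU g' hg' ≫ negJ2 g g' hg hg' =
    negIota (negT g g' hg hg') 1 := negMk_comp_eq (fun i => rfl)

theorem rel4 : negV g' hg' ≫ negJ2 g g' hg hg' =
    negIota (negT g g' hg hg') 2 := negMk_comp_eq (fun i => rfl)

theorem rel5 : negU (g ≫ g') (R.neg_comp _ _ hg hg') ≫ negJ3 g g' hg hg' =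
    negIota (negT g g' hg hg') 0 := negMk_comp_eq (fun i => rfl)

theorem rel6 : negV (g ≫ g') (R.neg_comp _ _ hg hg') ≫ negJ3 g g' hg hg' =
    negIota (negT g g' hg hg') 2 := negMk_comp_eq (fun i => rfl)

end Rels

theorem isIdMor_negIota_two {x z z' : C} (g : x ⟶ z) (g' : z ⟶ z') (hg hg') :
    IsIdMor ((lastNeg R).map (negIota (negT g g' hg hg') 2)) :=
  isIdMor_lastNeg_negMk _ _ _ rfl

theorem negA_aux {E' : Type*} [Category E'] {x z z' W1 W2 W12 T : E'}
    (U : x ⟶ W1) (V : z ⟶ W1) (U2 : z ⟶ W2) (V2 : z' ⟶ W2) (U12 : x ⟶ W12) (V12 : z' ⟶ W12)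
    (J1 : W1 ⟶ T) (J2 : W2 ⟶ T) (J3 : W12 ⟶ T) (I0 : x ⟶ T) (I1 : z ⟶ T) (I2 : z' ⟶ T)
    [IsIso V] [IsIso V2] [IsIso V12] [IsIso J2] [IsIso J3] [iI2 : IsIso I2]
    (eU12 : U12 = I0 ≫ inv J3) (eV12 : V12 = I2 ≫ inv J3) (eU2 : U2 = I1 ≫ inv J2)
    (eV2 : V2 = I2 ≫ inv J2) (eA0 : I0 = U ≫ J1) (eA1 : I1 = V ≫ J1) :
    U12 ≫ inv V12 = U ≫ inv V ≫ U2 ≫ inv V2 := by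
  subst eU12 eV12 eU2 eV2 eA0 eA1
  simp

/-- Cocycle lemma for composable negative morphisms. -/
theorem negA (G : NegObj R ⥤ E)
    {x z z' : C} (g : x ⟶ z) (g' : z ⟶ z') (hg : R.neg g) (hg' : R.neg g')
    [IsIso (G.map (negV g hg))] [IsIso (G.map (negV g' hg'))]
    [IsIso (G.map (negV (g ≫ g') (R.neg_comp _ _ hg hg')))]
    [IsIso (G.map (negJ2 g g' hg hg'))] [IsIso (G.map (negJ3 g g' hg hg'))]
    [IsIso (G.map (negIota (negT g g' hg hg') 2))] :
    G.map (negU (g ≫ g') (R.neg_comp _ _ hg hg')) ≫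
      inv (G.map (negV (g ≫ g') (R.neg_comp _ _ hg hg'))) =
    G.map (negU g hg) ≫ inv (G.map (negV g hg)) ≫
      G.map (negU g' hg') ≫ inv (G.map (negV g' hg')) := by
  have eU12 : G.map (negU (g ≫ g') (R.neg_comp _ _ hg hg')) =
      G.map (negIota (negT g g' hg hg') 0) ≫ inv (G.map (negJ3 g g' hg hg')) := by
    erw [IsIso.eq_comp_inv, ← G.map_comp, rel5]
    rfl
  have eV12 : G.map (negV (g ≫ g') (R.neg_comp _ _ hg hg')) =
      G.map (negIota (negT g g' hg hg') 2) ≫ inv (G.map (negJ3 g g' hg hg')) := by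
    erw [IsIso.eq_comp_inv, ← G.map_comp, rel6]
    rfl
  have eU2 : G.map (negU g' hg') =
      G.map (negIota (negT g g' hg hg') 1) ≫ inv (G.map (negJ2 g g' hg hg')) := by
    erw [IsIso.eq_comp_inv, ← G.map_comp, rel3]
    rfl
  have eV2 : G.map (negV g' hg') =
      G.map (negIota (negT g g' hg hg') 2) ≫ inv (G.map (negJ2 g g' hg hg')) := by
    erw [IsIso.eq_comp_inv, ← G.map_comp, rel4]
    rfl
  have eA0 : G.map (negIota (negT g g' hg hg') 0) =
      G.map (negU g hg) ≫ G.map (negJ1 g g' hg hg') := by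
    rw [← G.map_comp, rel1]
    rfl
  have eA1 : G.map (negIota (negT g g' hg hg') 1) =
      G.map (negV g hg) ≫ G.map (negJ1 g g' hg hg') := by
    rw [← G.map_comp, rel2]
    rfl
  exact negA_aux _ _ _ _ _ _ _ _ _ _ _ _ eU12 eV12 eU2 eV2 eA0 eA1 (iI2 := by assumption)

end NegH
/-! ### Lemma B and the functor `negH` -/

section NegH2

variable {R : ReedyStruct C}

/-- A morphism of two-object chains from a commuting square. -/
def negPhi {x y z z' : C} (h : x ⟶ y) (g : x ⟶ z) (g' : y ⟶ z') (h' : z ⟶ z')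
    (hh : R.pos h) (hg : R.neg g) (hg' : R.neg g') (hh' : R.pos h')
    (sq : h ≫ g' = g ≫ h') : negW g hg ⟶ negW g' hg' :=
  ⟨⟨OrderHom.id, fun i => match i with
      | ⟨0, _⟩ => h
      | ⟨1, _⟩ => h', fun {i j} hij => by
      fin_cases i <;> fin_cases j
      · show 𝟙 x ≫ h = h ≫ 𝟙 y; simp
      · exact sq.symm
      · exact absurd hij (Nat.not_succ_le_zero _)
      · show 𝟙 z ≫ h' = h' ≫ 𝟙 z'; simp⟩,
    fun i => by fin_cases i
                · exact hh
                · exact hh'⟩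

theorem relB1 {x y z z' : C} (h : x ⟶ y) (g : x ⟶ z) (g' : y ⟶ z') (h' : z ⟶ z')
    (hh : R.pos h) (hg : R.neg g) (hg' : R.neg g') (hh' : R.pos h')
    (sq : h ≫ g' = g ≫ h') :
    negP h hh ≫ negU g' hg' = negU g hg ≫ negPhi h g g' h' hh hg hg' hh' sq := by
  refine NegHom.ext2 (fun i => rfl) (fun i => ?_)
  show (h ≫ eqToHom rfl) ≫ eqToHom rfl = eqToHom rfl ≫ h
  simp

theorem relB2 {x y z z' : C} (h : x ⟶ y) (g : x ⟶ z) (g' : y ⟶ z') (h' : z ⟶ z')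
    (hh : R.pos h) (hg : R.neg g) (hg' : R.neg g') (hh' : R.pos h')
    (sq : h ≫ g' = g ≫ h') :
    negP h' hh' ≫ negV g' hg' = negV g hg ≫ negPhi h g g' h' hh hg hg' hh' sq := by
  refine NegHom.ext2 (fun i => rfl) (fun i => ?_)
  show (h' ≫ eqToHom rfl) ≫ eqToHom rfl = eqToHom rfl ≫ h'
  simp

variable {E : Type u₂} [Category.{v₂} E]

/-- Mixed square lemma. -/
theorem negB (G : NegObj R ⥤ E) {z₁ c' zm z₂ : C}
    (h₁ : z₁ ⟶ c') (g₂ : c' ⟶ z₂) (gm : z₁ ⟶ zm) (hm : zm ⟶ z₂)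
    (hh₁ : R.pos h₁) (hg₂ : R.neg g₂) (hgm : R.neg gm) (hhm : R.pos hm)
    (sq : h₁ ≫ g₂ = gm ≫ hm)
    [IsIso (G.map (negV gm hgm))] [IsIso (G.map (negV g₂ hg₂))] :
    G.map (negU gm hgm) ≫ inv (G.map (negV gm hgm)) ≫ G.map (negP hm hhm) =
    G.map (negP h₁ hh₁) ≫ G.map (negU g₂ hg₂) ≫ inv (G.map (negV g₂ hg₂)) := by
  have e1 := congrArg G.map (relB1 h₁ gm g₂ hm hh₁ hgm hg₂ hhm sq)
  have e2 := congrArg G.map (relB2 h₁ gm g₂ hm hh₁ hgm hg₂ hhm sq)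
  rw [G.map_comp, G.map_comp] at e1 e2
  have e3 : G.map (negPhi h₁ gm g₂ hm hh₁ hgm hg₂ hhm sq) ≫ inv (G.map (negV g₂ hg₂)) =
      inv (G.map (negV gm hgm)) ≫ G.map (negP hm hhm) := by
    rw [IsIso.comp_inv_eq, Category.assoc, IsIso.eq_inv_comp]
    exact e2.symm
  conv_lhs => rw [← e3, ← Category.assoc, ← e1]
  simp only [Category.assoc]

variable (G : NegObj R ⥤ E)
  (hG : ∀ {P Q : NegObj R} (f : P ⟶ Q), IsIdMor ((lastNeg R).map f) → IsIso (G.map f))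

/-- `H` on a chosen factorization. -/
noncomputable def negHmapAux {x y : C} (t : Σ z : C, (x ⟶ z) × (z ⟶ y))
    (ht : R.neg t.2.1 ∧ R.pos t.2.2) :
    G.obj (negPt R x) ⟶ G.obj (negPt R y) :=
  letI := hG (negV t.2.1 ht.1) (isIdMor_negV _ _)
  G.map (negU t.2.1 ht.1) ≫ inv (G.map (negV t.2.1 ht.1)) ≫ G.map (negP t.2.2 ht.2)

/-- The action of `H` on morphisms. -/
noncomputable def negHmap {x y : C} (f : x ⟶ y) : G.obj (negPt R x) ⟶ G.obj (negPt R y) :=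
  negHmapAux G hG (R.factor_existsUnique f).choose
    ⟨(R.factor_existsUnique f).choose_spec.1.1, (R.factor_existsUnique f).choose_spec.1.2.1⟩

theorem negHmapAux_congr {x y : C} {t t' : Σ z : C, (x ⟶ z) × (z ⟶ y)} (e : t = t')
    (ht : R.neg t.2.1 ∧ R.pos t.2.2) (ht' : R.neg t'.2.1 ∧ R.pos t'.2.2) :
    negHmapAux G hG t ht = negHmapAux G hG t' ht' := by subst e; rfl

theorem negHmap_eq {x y z : C} {f : x ⟶ y} (g : x ⟶ z) (h : z ⟶ y)
    (hg : R.neg g) (hh : R.pos h) (e : g ≫ h = f)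
    [IsIso (G.map (negV g hg))] :
    negHmap G hG f = G.map (negU g hg) ≫ inv (G.map (negV g hg)) ≫ G.map (negP h hh) := by
  have hu := (R.factor_existsUnique f).choose_spec.2 ⟨z, g, h⟩ ⟨hg, hh, e⟩
  exact negHmapAux_congr G hG hu.symm _ ⟨hg, hh⟩

theorem negHmap_pos {x y : C} (f : x ⟶ y) (hp : R.pos f) :
    negHmap G hG f = G.map (negP f hp) := by
  haveI := hG (negV (𝟙 x) (R.neg_id x)) (isIdMor_negV _ _)
  haveI := hG (negRetr x) (isIdMor_negRetr x)
  rw [negHmap_eq G hG (𝟙 x) f (R.neg_id x) hp (Category.id_comp f), ← Category.assoc,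
    negUV_id, Category.id_comp]

theorem negHmap_neg {x y : C} (f : x ⟶ y) (hn : R.neg f)
    [IsIso (G.map (negV f hn))] :
    negHmap G hG f = G.map (negU f hn) ≫ inv (G.map (negV f hn)) := by
  rw [negHmap_eq G hG f (𝟙 y) hn (R.pos_id y) (Category.comp_id f), negP_id, G.map_id,
    Category.comp_id]

/-- The functor `H : C ⥤ E` induced by a weq-inverting functor `G`. -/
noncomputable def negH : C ⥤ E where
  obj c := G.obj (negPt R c)
  map f := negHmap G hG f
  map_id x := by
    show negHmap G hG (𝟙 x) = 𝟙 (G.obj (negPt R x))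
    haveI := hG (negV (𝟙 x) (R.neg_id x)) (isIdMor_negV _ _)
    haveI := hG (negRetr x) (isIdMor_negRetr x)
    rw [negHmap_pos G hG (𝟙 x) (R.pos_id x), negP_id, G.map_id]
  map_comp {x y w} f₁ f₂ := by
    show negHmap G hG (f₁ ≫ f₂) = negHmap G hG f₁ ≫ negHmap G hG f₂
    obtain ⟨⟨z₁, g₁, h₁⟩, ⟨hg₁, hh₁, e₁⟩, -⟩ := R.factor_existsUnique f₁
    obtain ⟨⟨z₂, g₂, h₂⟩, ⟨hg₂, hh₂, e₂⟩, -⟩ := R.factor_existsUnique f₂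
    obtain ⟨⟨zm, gm, hm⟩, ⟨hgm, hhm, em⟩, -⟩ := R.factor_existsUnique (h₁ ≫ g₂)
    haveI := hG (negV g₁ hg₁) (isIdMor_negV _ _)
    haveI := hG (negV g₂ hg₂) (isIdMor_negV _ _)
    haveI := hG (negV gm hgm) (isIdMor_negV _ _)
    haveI := hG (negV (g₁ ≫ gm) (R.neg_comp _ _ hg₁ hgm)) (isIdMor_negV _ _)
    haveI := hG (negJ2 g₁ gm hg₁ hgm) (isIdMor_negJ2 _ _ _ _)
    haveI := hG (negJ3 g₁ gm hg₁ hgm) (isIdMor_negJ3 _ _ _ _)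
    haveI := hG (negIota (negT g₁ gm hg₁ hgm) 2) (isIdMor_negIota_two _ _ _ _)
    have hfact : (g₁ ≫ gm) ≫ hm ≫ h₂ = f₁ ≫ f₂ := by
      have em' : gm ≫ hm ≫ h₂ = h₁ ≫ g₂ ≫ h₂ := by
        rw [← Category.assoc, em, Category.assoc]
      rw [← e₁, ← e₂]
      simp only [Category.assoc]
      rw [em']
    rw [negHmap_eq G hG (g₁ ≫ gm) (hm ≫ h₂) (R.neg_comp _ _ hg₁ hgm)
        (R.pos_comp _ _ hhm hh₂) hfact,
      negHmap_eq G hG g₁ h₁ hg₁ hh₁ e₁, negHmap_eq G hG g₂ h₂ hg₂ hh₂ e₂,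
      negP_comp hm hhm h₂ hh₂, G.map_comp]
    have hA' := reassoc_of% (negA G g₁ gm hg₁ hgm)
    rw [hA']
    have hB' := reassoc_of% (negB G h₁ g₂ gm hm hh₁ hg₂ hgm hhm em.symm)
    simp only [Category.assoc]
    rw [hB']

end NegH2
/-! ### The localization property of `lastNeg` -/

section NegP2

variable {R : ReedyStruct C}

set_option maxHeartbeats 1000000 in
/-- The morphism of chains realizing `ν = Q(j ≤ last)`. -/
def negPsi (Q : NegObj R) (j : Fin (Q.n + 1)) :
    negW (Q.X.map (homOfLE (Fin.le_last j))) (Q.negMap _) ⟶ Q :=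
  negMk ⟨fun i => if i.1 = 0 then j else Fin.last Q.n, by
      intro a b hab
      dsimp only
      split <;> split
      · exact le_rfl
      · exact Fin.le_last _
      · exfalso
        rename_i h1 h2
        have ha : a.1 ≤ b.1 := hab
        have hb : a.1 < 2 := a.isLt
        omega
      · exact le_rfl⟩
    (fun i => by fin_cases i <;> rfl)
    (fun {i j'} h => by
      fin_cases i <;> fin_cases j'
      · rw [map_homOfLE_isid Q.X _ rfl]
        simp only [eqToHom_refl, Category.comp_id, Category.id_comp]
        exact Category.comp_id _
      · simp only [eqToHom_refl, Category.comp_id, Category.id_comp]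
        exact (Category.comp_id _).trans (Category.id_comp _).symm
      · exact absurd h (Nat.not_succ_le_zero _)
      · rw [map_homOfLE_isid Q.X _ rfl]
        simp only [eqToHom_refl, Category.comp_id, Category.id_comp]
        exact Category.comp_id _)

set_option maxHeartbeats 1000000 in
theorem relPsi1 (Q : NegObj R) (j : Fin (Q.n + 1)) :
    negV (Q.X.map (homOfLE (Fin.le_last j))) (Q.negMap _) ≫ negPsi Q j = negEta Q :=
  negMk_comp_eq (fun i => rfl)

set_option maxHeartbeats 1000000 in
theorem relPsi2 {P Q : NegObj R} (ψ : P ⟶ Q) :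
    negP (ψ.1.θ (Fin.last P.n)) (ψ.2 _) ≫
      negU (Q.X.map (homOfLE (Fin.le_last (ψ.1.α (Fin.last P.n)))))
        (Q.negMap _) ≫ negPsi Q (ψ.1.α (Fin.last P.n)) =
    negEta P ≫ ψ := by
  refine NegHom.ext2 (fun i => rfl) (fun i => ?_)
  show (ψ.1.θ (Fin.last P.n) ≫ eqToHom rfl ≫ eqToHom rfl) ≫ eqToHom rfl =
    eqToHom rfl ≫ ψ.1.θ ((OrderHom.const _ (Fin.last P.n)) i)
  simp
  rfl

variable {E : Type u₂} [Category.{v₂} E]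

set_option maxHeartbeats 1000000 in
theorem negH_natural (G : NegObj R ⥤ E)
    (hG : ∀ {P Q : NegObj R} (f : P ⟶ Q), IsIdMor ((lastNeg R).map f) → IsIso (G.map f))
    {P Q : NegObj R} (ψ : P ⟶ Q) :
    negHmap G hG ((lastNeg R).map ψ) ≫ G.map (negEta Q) = G.map (negEta P) ≫ G.map ψ := by
  haveI := hG (negV (Q.X.map (homOfLE (Fin.le_last (ψ.1.α (Fin.last P.n)))))
    (Q.negMap _)) (isIdMor_negV _ _)
  have hsplit : (lastNeg R).map ψ = ψ.1.θ (Fin.last P.n) ≫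
      Q.X.map (homOfLE (Fin.le_last (ψ.1.α (Fin.last P.n)))) := rfl
  have hcomp : negHmap G hG (ψ.1.θ (Fin.last P.n) ≫
      Q.X.map (homOfLE (Fin.le_last (ψ.1.α (Fin.last P.n))))) =
      negHmap G hG (ψ.1.θ (Fin.last P.n)) ≫
        negHmap G hG (Q.X.map (homOfLE (Fin.le_last (ψ.1.α (Fin.last P.n))))) :=
    (negH G hG).map_comp _ _
  erw [hsplit, hcomp, negHmap_pos G hG _ (ψ.2 _), negHmap_neg G hG _ (Q.negMap _),
    show negEta Q = negV _ (Q.negMap (Fin.le_last (ψ.1.α (Fin.last P.n)))) ≫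
      negPsi Q (ψ.1.α (Fin.last P.n)) from (relPsi1 Q _).symm,
    G.map_comp]
  refine nat_aux _ _ _ _ _ _ (hv := by assumption) ?_
  erw [← G.map_comp, ← G.map_comp, relPsi2 ψ, G.map_comp]
  rfl

theorem negP2 (G : NegObj R ⥤ E)
    (hG : ∀ {P Q : NegObj R} (f : P ⟶ Q), IsIdMor ((lastNeg R).map f) → IsIso (G.map f)) :
    ∃ H : C ⥤ E, Nonempty (lastNeg R ⋙ H ≅ G) := by
  refine ⟨negH G hG, ⟨NatIso.ofComponents
    (fun P => @asIso _ _ _ _ _ (hG (negEta P) (isIdMor_negEta P))) ?_⟩⟩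
  intro P Q ψ
  show negHmap G hG ((lastNeg R).map ψ) ≫ G.map (negEta Q) = G.map (negEta P) ≫ G.map ψ
  exact negH_natural G hG ψ

end NegP2

theorem loc_neg (R : ReedyStruct C) : IsWeakLocalizationAtLastWeq.{v₂, u₂} (lastNeg R) :=
  isWeakLocalization_of _ negP1 (fun G hG => negP2 G hG)
/-! ### The case of `Down_*(C)` -/

section DownStarCase

variable {R : ReedyStruct C}

theorem lastDownStar_map_mk {P Q : NegObj R} (m : P ⟶ Q) :
    (lastDownStar R).map (Quot.mk _ m : (⟨P⟩ : DownStar R) ⟶ ⟨Q⟩) = (lastNeg R).map m := rfl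

theorem lastDS_negEta (P : DownStar R) :
    (lastDownStar R).map (Quot.mk _ (negEta P.obj) :
        (⟨negPt R (P.obj.X.obj (Fin.last P.obj.n))⟩ : DownStar R) ⟶ ⟨P.obj⟩) =
      𝟙 ((lastDownStar R).obj
        (⟨negPt R (P.obj.X.obj (Fin.last P.obj.n))⟩ : DownStar R)) :=
  lastNeg_map_negEta P.obj

theorem lastDS_negV {x z : C} (g : x ⟶ z) (hg : R.neg g) :
    (lastDownStar R).map (Quot.mk _ (negV g hg) :
        (⟨negPt R z⟩ : DownStar R) ⟶ ⟨negW g hg⟩) =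
      eqToHom rfl :=
  lastNeg_map_negV g hg

theorem lastDS_negU {x z : C} (g : x ⟶ z) (hg : R.neg g) :
    (lastDownStar R).map (Quot.mk _ (negU g hg) :
        (⟨negPt R x⟩ : DownStar R) ⟶ ⟨negW g hg⟩) = g :=
  lastNeg_map_negU g hg

theorem lastDS_negP {x y : C} (h : x ⟶ y) (hp : R.pos h) :
    (lastDownStar R).map (Quot.mk _ (negP h hp) :
        (⟨negPt R x⟩ : DownStar R) ⟶ ⟨negPt R y⟩) = h :=
  lastNeg_map_negP h hp

theorem dsP1 {E : Type u₂} [Category.{v₂} E] (F G : C ⥤ E)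
    (ε : lastDownStar R ⋙ F ⟶ lastDownStar R ⋙ G) :
    ∃! δ : F ⟶ G, Functor.whiskerLeft (lastDownStar R) δ = ε := by
  have hfix : ∀ P : DownStar R,
      ε.app ⟨negPt R (P.obj.X.obj (Fin.last P.obj.n))⟩ = ε.app P := by
    intro P
    have h := ε.naturality
      (Quot.mk _ (negEta P.obj) :
        (⟨negPt R (P.obj.X.obj (Fin.last P.obj.n))⟩ : DownStar R) ⟶ ⟨P.obj⟩)
    dsimp at h
    rw [lastDS_negEta] at h
    exact map_id_cancel F G _ _ h.symm
  have hnat : ∀ ⦃c c' : C⦄ (f : c ⟶ c'),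
      F.map f ≫ ε.app ⟨negPt R c'⟩ = ε.app ⟨negPt R c⟩ ≫ G.map f := by
    intro c c' f
    obtain ⟨⟨z, g, h⟩, ⟨hg, hh, he⟩, -⟩ := R.factor_existsUnique f
    dsimp only at he
    have hWpt : ε.app ⟨negW g hg⟩ = ε.app ⟨negPt R z⟩ := by
      have h1 := ε.naturality
        (Quot.mk _ (negV g hg) : (⟨negPt R z⟩ : DownStar R) ⟶ ⟨negW g hg⟩)
      dsimp at h1
      rw [lastDS_negV] at h1
      exact (map_id_cancel F G _ _ h1.symm).symm
    have hups : F.map g ≫ ε.app ⟨negPt R z⟩ = ε.app ⟨negPt R c⟩ ≫ G.map g := by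
      have h1 := ε.naturality
        (Quot.mk _ (negU g hg) : (⟨negPt R c⟩ : DownStar R) ⟶ ⟨negW g hg⟩)
      dsimp at h1
      rw [lastDS_negU] at h1
      rw [← hWpt]
      exact h1
    have hp : F.map h ≫ ε.app ⟨negPt R c'⟩ = ε.app ⟨negPt R z⟩ ≫ G.map h := by
      have h1 := ε.naturality
        (Quot.mk _ (negP h hh) : (⟨negPt R z⟩ : DownStar R) ⟶ ⟨negPt R c'⟩)
      dsimp at h1
      rw [lastDS_negP] at h1
      exact h1
    erw [← he, F.map_comp, G.map_comp, Category.assoc, hp, ← Category.assoc, hups,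
      Category.assoc]
    rfl
  refine ⟨⟨fun c => ε.app ⟨negPt R c⟩, hnat⟩, ?_, ?_⟩
  · ext P
    exact hfix P
  · intro δ' h'
    ext c
    exact congr_app h' (⟨negPt R c⟩ : DownStar R)

theorem dsP2 {E : Type u₂} [Category.{v₂} E] (Gs : DownStar R ⥤ E)
    (hGs : ∀ {P Q : DownStar R} (f : P ⟶ Q),
      IsIdMor ((lastDownStar R).map f) → IsIso (Gs.map f)) :
    ∃ H : C ⥤ E, Nonempty (lastDownStar R ⋙ H ≅ Gs) := by
  have hG : ∀ {P Q : NegObj R} (f : P ⟶ Q), IsIdMor ((lastNeg R).map f) →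
      IsIso ((qStar R ⋙ Gs).map f) := by
    intro P Q f hf
    exact hGs ((qStar R).map f) hf
  refine ⟨negH (qStar R ⋙ Gs) hG, ⟨NatIso.ofComponents
    (fun P => @asIso _ _ _ _ (Gs.map (Quot.mk _ (negEta P.obj)))
      (hGs (P := ⟨negPt R (P.obj.X.obj (Fin.last P.obj.n))⟩)
        (Quot.mk _ (negEta P.obj)) (isIdMor_negEta P.obj))) ?_⟩⟩
  intro P Q f
  induction f using Quot.ind with
  | _ f =>
    show negHmap (qStar R ⋙ Gs) hG ((lastNeg R).map f) ≫
        (qStar R ⋙ Gs).map (negEta Q.obj) =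
      (qStar R ⋙ Gs).map (negEta P.obj) ≫ (qStar R ⋙ Gs).map f
    exact negH_natural (qStar R ⋙ Gs) hG f

theorem loc_downStar (R : ReedyStruct C) :
    IsWeakLocalizationAtLastWeq.{v₂, u₂} (lastDownStar R) :=
  isWeakLocalization_of _ dsP1 (fun G hG => dsP2 G hG)

end DownStarCase
/-! ### The case of `∫N^{--,+}_+(C)` and `Down(C)`: basics -/

section StrictLayer

variable {R : ReedyStruct C}

theorem StrictHom.ext2 {P Q : StrictObj R} {f g : P ⟶ Q}
    (hα : ∀ i, f.1.1.α i = g.1.1.α i)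
    (hθ : ∀ i, f.1.1.θ i ≫ eqToHom (congrArg Q.toNegObj.X.obj (hα i)) = g.1.1.θ i) :
    f = g :=
  Subtype.ext (NegHom.ext2 hα hθ)

theorem pos_comp_eqToHom (R : ReedyStruct C) {x y z : C} (h : x ⟶ y) (hp : R.pos h)
    (e : y = z) : R.pos (h ≫ eqToHom e) := by subst e; simpa using hp

theorem neg_comp_not_isIdMor {x z z' : C} {g : x ⟶ z} {g' : z ⟶ z'}
    (hg : R.neg g) (hg' : R.neg g') (h1 : ¬IsIdMor g) (h2 : ¬IsIdMor g') :
    ¬IsIdMor (g ≫ g') := by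
  rintro ⟨e, he⟩
  subst e
  exact R.wf.asymmetric z x (Or.inr ⟨g, hg, h1⟩) (Or.inr ⟨g', hg', h2⟩)

theorem isIdMor_fst_of_eq {x y : C} {t t' : Σ z : C, (x ⟶ z) × (z ⟶ y)} (e : t = t')
    (h : IsIdMor t.2.1) : IsIdMor t'.2.1 := by subst e; exact h

/-- The one-object strict chain. -/
def sPt (R : ReedyStruct C) (c : C) : StrictObj R :=
  ⟨negPt R c, fun {i j} _ _ => @Subsingleton.elim (Fin 1) _ i j⟩

def sP {x y : C} (h : x ⟶ y) (hp : R.pos h) : sPt R x ⟶ sPt R y :=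
  ⟨negP h hp, fun _ _ e => e⟩

theorem sP_id (x : C) : sP (𝟙 x) (R.pos_id x) = 𝟙 (sPt R x) :=
  Subtype.ext (negP_id x)

theorem sP_comp {x y z : C} (h : x ⟶ y) (hp : R.pos h) (h' : y ⟶ z) (hp' : R.pos h') :
    sP (h ≫ h') (R.pos_comp _ _ hp hp') = sP h hp ≫ sP h' hp' :=
  Subtype.ext (negP_comp h hp h' hp')

/-- The two-object strict chain on a non-identity negative morphism. -/
def sW {x z : C} (g : x ⟶ z) (hg : R.neg g) (hni : ¬IsIdMor g) : StrictObj R :=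
  ⟨negW g hg, by
    intro i j h hid
    fin_cases i <;> fin_cases j
    · rfl
    · exact absurd hid hni
    · exact absurd h (Nat.not_succ_le_zero _)
    · rfl⟩

def sU {x z : C} (g : x ⟶ z) (hg : R.neg g) (hni : ¬IsIdMor g) :
    sPt R x ⟶ sW g hg hni :=
  ⟨negU g hg, fun a b _ => @Subsingleton.elim (Fin 1) _ a b⟩

def sV {x z : C} (g : x ⟶ z) (hg : R.neg g) (hni : ¬IsIdMor g) :
    sPt R z ⟶ sW g hg hni :=
  ⟨negV g hg, fun a b _ => @Subsingleton.elim (Fin 1) _ a b⟩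

def sEta (P : StrictObj R) :
    sPt R (P.toNegObj.X.obj (Fin.last P.toNegObj.n)) ⟶ P :=
  ⟨negEta P.toNegObj, fun a b _ => @Subsingleton.elim (Fin 1) _ a b⟩

theorem isIdMor_lastS {P Q : StrictObj R} (f : P ⟶ Q)
    (h : IsIdMor ((lastNeg R).map f.1)) : IsIdMor ((lastStrict R).map f) := h

variable {E : Type u₂} [Category.{v₂} E]

/-- The canonical morphism `G (pt x) ⟶ G (pt z)` associated to a negative `g`. -/
noncomputable def sUV (G : StrictObj R ⥤ E)
    (hG : ∀ {P Q : StrictObj R} (f : P ⟶ Q), IsIdMor ((lastStrict R).map f) → IsIso (G.map f))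
    {x z : C} (g : x ⟶ z) (hg : R.neg g) : G.obj (sPt R x) ⟶ G.obj (sPt R z) :=
  letI := Classical.dec (IsIdMor g)
  if h : IsIdMor g then eqToHom (congrArg (fun t => G.obj (sPt R t)) h.choose)
  else
    letI := hG (sV g hg h) (isIdMor_lastS _ (isIdMor_negV g hg))
    G.map (sU g hg h) ≫ inv (G.map (sV g hg h))

section sUVLemmas

variable (G : StrictObj R ⥤ E)
  (hG : ∀ {P Q : StrictObj R} (f : P ⟶ Q), IsIdMor ((lastStrict R).map f) → IsIso (G.map f))

theorem sUV_isid {x z : C} {g : x ⟶ z} (hg : R.neg g) (h : IsIdMor g) :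
    sUV G hG g hg = eqToHom (congrArg (fun t => G.obj (sPt R t)) h.choose) := by
  unfold sUV
  rw [dif_pos h]

theorem sUV_not {x z : C} {g : x ⟶ z} (hg : R.neg g) (h : ¬IsIdMor g)
    [IsIso (G.map (sV g hg h))] :
    sUV G hG g hg = G.map (sU g hg h) ≫ inv (G.map (sV g hg h)) := by
  unfold sUV
  rw [dif_neg h]

theorem sUV_congr {x z : C} {g g' : x ⟶ z} (e : g = g') (hg : R.neg g) (hg' : R.neg g') :
    sUV G hG g hg = sUV G hG g' hg' := by subst e; rfl

theorem sUV_eqToHom {x z : C} (e : x = z) (hg : R.neg (eqToHom e)) :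
    sUV G hG (eqToHom e) hg = eqToHom (congrArg (fun t => G.obj (sPt R t)) e) := by
  rw [sUV_isid G hG hg (IsIdMor.eqToHom e)]

theorem sUV_id (x : C) (hg : R.neg (𝟙 x)) : sUV G hG (𝟙 x) hg = 𝟙 _ := by
  rw [sUV_isid G hG hg (IsIdMor.id x)]
  simp

end sUVLemmas

/-- Strict versions of the three-object chain and its morphisms. -/
def sT {x z z' : C} (g : x ⟶ z) (g' : z ⟶ z') (hg : R.neg g) (hg' : R.neg g')
    (h1 : ¬IsIdMor g) (h2 : ¬IsIdMor g') : StrictObj R :=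
  ⟨negT g g' hg hg', by
    intro i j h hid
    fin_cases i <;> fin_cases j
    · rfl
    · exact absurd hid h1
    · exact absurd hid (neg_comp_not_isIdMor hg hg' h1 h2)
    · exact absurd h (Nat.not_succ_le_zero _)
    · rfl
    · exact absurd hid h2
    · exact absurd h (Nat.not_succ_le_zero _)
    · exact absurd h (Nat.not_succ_le_self _)
    · rfl⟩

section StrictT

variable {x z z' : C} (g : x ⟶ z) (g' : z ⟶ z') (hg : R.neg g) (hg' : R.neg g')
  (h1 : ¬IsIdMor g) (h2 : ¬IsIdMor g')

def sJ1 : sW g hg h1 ⟶ sT g g' hg hg' h1 h2 :=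
  ⟨negJ1 g g' hg hg', fun a b e => by
    have h0 := congrArg Fin.val e
    have h' : a.1 = b.1 := h0
    exact Fin.ext h'⟩

def sJ2 : sW g' hg' h2 ⟶ sT g g' hg hg' h1 h2 :=
  ⟨negJ2 g g' hg hg', fun a b e => by
    have h0 := congrArg Fin.val e
    have h' : a.1 + 1 = b.1 + 1 := h0
    exact Fin.ext (by omega)⟩

def sJ3 : sW (g ≫ g') (R.neg_comp _ _ hg hg') (neg_comp_not_isIdMor hg hg' h1 h2) ⟶
    sT g g' hg hg' h1 h2 :=
  ⟨negJ3 g g' hg hg', fun a b e => by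
    have h0 := congrArg Fin.val e
    have h' : 2 * a.1 = 2 * b.1 := h0
    exact Fin.ext (by omega)⟩

def sIota0 : sPt R x ⟶ sT g g' hg hg' h1 h2 :=
  ⟨negIota (negT g g' hg hg') 0, fun a b _ => @Subsingleton.elim (Fin 1) _ a b⟩

def sIota1 : sPt R z ⟶ sT g g' hg hg' h1 h2 :=
  ⟨negIota (negT g g' hg hg') 1, fun a b _ => @Subsingleton.elim (Fin 1) _ a b⟩

def sIota2 : sPt R z' ⟶ sT g g' hg hg' h1 h2 :=
  ⟨negIota (negT g g' hg hg') 2, fun a b _ => @Subsingleton.elim (Fin 1) _ a b⟩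

theorem sRel1 : sU g hg h1 ≫ sJ1 g g' hg hg' h1 h2 = sIota0 g g' hg hg' h1 h2 :=
  Subtype.ext (rel1 g g' hg hg')

theorem sRel2 : sV g hg h1 ≫ sJ1 g g' hg hg' h1 h2 = sIota1 g g' hg hg' h1 h2 :=
  Subtype.ext (rel2 g g' hg hg')

theorem sRel3 : sU g' hg' h2 ≫ sJ2 g g' hg hg' h1 h2 = sIota1 g g' hg hg' h1 h2 :=
  Subtype.ext (rel3 g g' hg hg')

theorem sRel4 : sV g' hg' h2 ≫ sJ2 g g' hg hg' h1 h2 = sIota2 g g' hg hg' h1 h2 :=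
  Subtype.ext (rel4 g g' hg hg')

theorem sRel5 : sU (g ≫ g') (R.neg_comp _ _ hg hg') (neg_comp_not_isIdMor hg hg' h1 h2) ≫
    sJ3 g g' hg hg' h1 h2 = sIota0 g g' hg hg' h1 h2 :=
  Subtype.ext (rel5 g g' hg hg')

theorem sRel6 : sV (g ≫ g') (R.neg_comp _ _ hg hg') (neg_comp_not_isIdMor hg hg' h1 h2) ≫
    sJ3 g g' hg hg' h1 h2 = sIota2 g g' hg hg' h1 h2 :=
  Subtype.ext (rel6 g g' hg hg')

end StrictT

/-- Cocycle lemma, strict version. -/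
theorem sA (G : StrictObj R ⥤ E)
    (hG : ∀ {P Q : StrictObj R} (f : P ⟶ Q), IsIdMor ((lastStrict R).map f) → IsIso (G.map f))
    {x z z' : C} (g : x ⟶ z) (g' : z ⟶ z') (hg : R.neg g) (hg' : R.neg g') :
    sUV G hG (g ≫ g') (R.neg_comp _ _ hg hg') = sUV G hG g hg ≫ sUV G hG g' hg' := by
  by_cases h1 : IsIdMor g
  · obtain ⟨e, rfl⟩ := h1
    subst e
    rw [sUV_congr G hG (show eqToHom rfl ≫ g' = g' by simp) _ hg',
      sUV_eqToHom G hG rfl (by simpa using R.neg_id x)]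
    simp
  · by_cases h2 : IsIdMor g'
    · obtain ⟨e, rfl⟩ := h2
      subst e
      rw [sUV_congr G hG (show g ≫ eqToHom rfl = g by simp) _ hg,
        sUV_eqToHom G hG rfl (by simpa using R.neg_id z)]
      simp
    · have h12 := neg_comp_not_isIdMor hg hg' h1 h2
      haveI := hG (sV g hg h1) (isIdMor_lastS _ (isIdMor_negV g hg))
      haveI := hG (sV g' hg' h2) (isIdMor_lastS _ (isIdMor_negV g' hg'))
      haveI := hG (sV (g ≫ g') (R.neg_comp _ _ hg hg') h12)
        (isIdMor_lastS _ (isIdMor_negV _ _))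
      haveI := hG (sJ2 g g' hg hg' h1 h2) (isIdMor_lastS _ (isIdMor_negJ2 g g' hg hg'))
      haveI := hG (sJ3 g g' hg hg' h1 h2) (isIdMor_lastS _ (isIdMor_negJ3 g g' hg hg'))
      haveI := hG (sIota2 g g' hg hg' h1 h2)
        (isIdMor_lastS _ (isIdMor_negIota_two g g' hg hg'))
      rw [sUV_not G hG _ h1, sUV_not G hG _ h2, sUV_not G hG _ h12]
      have eU12 : G.map (sU (g ≫ g') (R.neg_comp _ _ hg hg') h12) =
          G.map (sIota0 g g' hg hg' h1 h2) ≫ inv (G.map (sJ3 g g' hg hg' h1 h2)) := by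
        rw [IsIso.eq_comp_inv, ← G.map_comp, sRel5]
      have eV12 : G.map (sV (g ≫ g') (R.neg_comp _ _ hg hg') h12) =
          G.map (sIota2 g g' hg hg' h1 h2) ≫ inv (G.map (sJ3 g g' hg hg' h1 h2)) := by
        rw [IsIso.eq_comp_inv, ← G.map_comp, sRel6]
      have eU2 : G.map (sU g' hg' h2) =
          G.map (sIota1 g g' hg hg' h1 h2) ≫ inv (G.map (sJ2 g g' hg hg' h1 h2)) := by
        rw [IsIso.eq_comp_inv, ← G.map_comp, sRel3]
      have eV2 : G.map (sV g' hg' h2) =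
          G.map (sIota2 g g' hg hg' h1 h2) ≫ inv (G.map (sJ2 g g' hg hg' h1 h2)) := by
        rw [IsIso.eq_comp_inv, ← G.map_comp, sRel4]
      have eA0 : G.map (sIota0 g g' hg hg' h1 h2) =
          G.map (sU g hg h1) ≫ G.map (sJ1 g g' hg hg' h1 h2) := by
        rw [← G.map_comp, sRel1]
      have eA1 : G.map (sIota1 g g' hg hg' h1 h2) =
          G.map (sV g hg h1) ≫ G.map (sJ1 g g' hg hg' h1 h2) := by
        rw [← G.map_comp, sRel2]
      simp [eU12, eV12, eU2, eV2, eA0, eA1]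

end StrictLayer
/-! ### Lemma B (strict), the functor, and naturality -/

section StrictH

variable {R : ReedyStruct C}

def sPhi {x y z z' : C} (h : x ⟶ y) (g : x ⟶ z) (g' : y ⟶ z') (h' : z ⟶ z')
    (hh : R.pos h) (hg : R.neg g) (hg' : R.neg g') (hh' : R.pos h')
    (sq : h ≫ g' = g ≫ h') (hni : ¬IsIdMor g) (hni' : ¬IsIdMor g') :
    sW g hg hni ⟶ sW g' hg' hni' :=
  ⟨negPhi h g g' h' hh hg hg' hh' sq, fun _ _ e => e⟩

variable {E : Type u₂} [Category.{v₂} E]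

theorem sB (G : StrictObj R ⥤ E)
    (hG : ∀ {P Q : StrictObj R} (f : P ⟶ Q), IsIdMor ((lastStrict R).map f) → IsIso (G.map f))
    (hGle : ∀ {P Q : StrictObj R} (a b : P ⟶ Q), StrictHom.le a b → G.map a = G.map b)
    {z₁ c' zm z₂ : C} (h₁ : z₁ ⟶ c') (g₂ : c' ⟶ z₂) (gm : z₁ ⟶ zm) (hm : zm ⟶ z₂)
    (hh₁ : R.pos h₁) (hg₂ : R.neg g₂) (hgm : R.neg gm) (hhm : R.pos hm)
    (sq : h₁ ≫ g₂ = gm ≫ hm) :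
    sUV G hG gm hgm ≫ G.map (sP hm hhm) = G.map (sP h₁ hh₁) ≫ sUV G hG g₂ hg₂ := by
  by_cases hidm : IsIdMor gm
  · obtain ⟨e, rfl⟩ := hidm
    subst e
    rw [sUV_eqToHom G hG rfl hgm]
    simp only [eqToHom_refl, Category.id_comp]
    by_cases hid2 : IsIdMor g₂
    · obtain ⟨e2, rfl⟩ := hid2
      subst e2
      rw [sUV_eqToHom G hG rfl hg₂]
      simp only [eqToHom_refl, Category.comp_id]
      have hhe : h₁ = hm := by simpa using sq
      subst hhe
      rfl
    · haveI := hG (sV g₂ hg₂ hid2) (isIdMor_lastS _ (isIdMor_negV g₂ hg₂))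
      rw [sUV_not G hG _ hid2]
      have hle : StrictHom.le (sP h₁ hh₁ ≫ sU g₂ hg₂ hid2)
          (sP hm hhm ≫ sV g₂ hg₂ hid2) := by
        constructor
        · intro i; exact Nat.zero_le _
        · intro i hi
          show hm ≫ eqToHom rfl = (h₁ ≫ eqToHom rfl) ≫ (negW g₂ hg₂).X.map (homOfLE hi)
          rw [show (negW g₂ hg₂).X.map (homOfLE hi) = g₂ from rfl]
          simp only [eqToHom_refl, Category.comp_id, Category.id_comp]
          exact (Category.id_comp _).symm.trans sq.symm
      have key := hGle _ _ hle
      rw [G.map_comp, G.map_comp] at key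
      rw [← Category.assoc, key, Category.assoc, IsIso.hom_inv_id, Category.comp_id]
  · by_cases hid2 : IsIdMor g₂
    · exfalso
      obtain ⟨e2, rfl⟩ := hid2
      subst e2
      obtain ⟨t0, ht0, huniq⟩ := R.factor_existsUnique (h₁ ≫ eqToHom rfl)
      have e1 := huniq ⟨z₁, 𝟙 z₁, h₁ ≫ eqToHom rfl⟩
        ⟨R.neg_id _, pos_comp_eqToHom R h₁ hh₁ rfl, Category.id_comp _⟩
      have e2' := huniq ⟨zm, gm, hm⟩ ⟨hgm, hhm, sq.symm⟩
      exact hidm (isIdMor_fst_of_eq (e1.trans e2'.symm) (IsIdMor.id z₁))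
    · haveI := hG (sV gm hgm hidm) (isIdMor_lastS _ (isIdMor_negV _ _))
      haveI := hG (sV g₂ hg₂ hid2) (isIdMor_lastS _ (isIdMor_negV _ _))
      rw [sUV_not G hG _ hidm, sUV_not G hG _ hid2]
      have e1 := congrArg G.map
        (Subtype.ext (relB1 h₁ gm g₂ hm hh₁ hgm hg₂ hhm sq) :
          sP h₁ hh₁ ≫ sU g₂ hg₂ hid2 =
            sU gm hgm hidm ≫ sPhi h₁ gm g₂ hm hh₁ hgm hg₂ hhm sq hidm hid2)
      have e2 := congrArg G.map
        (Subtype.ext (relB2 h₁ gm g₂ hm hh₁ hgm hg₂ hhm sq) :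
          sP hm hhm ≫ sV g₂ hg₂ hid2 =
            sV gm hgm hidm ≫ sPhi h₁ gm g₂ hm hh₁ hgm hg₂ hhm sq hidm hid2)
      rw [G.map_comp, G.map_comp] at e1 e2
      have e3 : G.map (sPhi h₁ gm g₂ hm hh₁ hgm hg₂ hhm sq hidm hid2) ≫
          inv (G.map (sV g₂ hg₂ hid2)) =
          inv (G.map (sV gm hgm hidm)) ≫ G.map (sP hm hhm) := by
        rw [IsIso.comp_inv_eq, Category.assoc, IsIso.eq_inv_comp]
        exact e2.symm
      simp only [Category.assoc]
      conv_lhs => rw [← e3, ← Category.assoc, ← e1]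
      simp only [Category.assoc]

variable (G : StrictObj R ⥤ E)
  (hG : ∀ {P Q : StrictObj R} (f : P ⟶ Q), IsIdMor ((lastStrict R).map f) → IsIso (G.map f))
  (hGle : ∀ {P Q : StrictObj R} (a b : P ⟶ Q), StrictHom.le a b → G.map a = G.map b)

noncomputable def sHmapAux {x y : C} (t : Σ z : C, (x ⟶ z) × (z ⟶ y))
    (ht : R.neg t.2.1 ∧ R.pos t.2.2) : G.obj (sPt R x) ⟶ G.obj (sPt R y) :=
  sUV G hG t.2.1 ht.1 ≫ G.map (sP t.2.2 ht.2)

noncomputable def sHmap {x y : C} (f : x ⟶ y) : G.obj (sPt R x) ⟶ G.obj (sPt R y) :=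
  sHmapAux G hG (R.factor_existsUnique f).choose
    ⟨(R.factor_existsUnique f).choose_spec.1.1, (R.factor_existsUnique f).choose_spec.1.2.1⟩

theorem sHmapAux_congr {x y : C} {t t' : Σ z : C, (x ⟶ z) × (z ⟶ y)} (e : t = t')
    (ht : R.neg t.2.1 ∧ R.pos t.2.2) (ht' : R.neg t'.2.1 ∧ R.pos t'.2.2) :
    sHmapAux G hG t ht = sHmapAux G hG t' ht' := by subst e; rfl

theorem sHmap_eq {x y z : C} {f : x ⟶ y} (g : x ⟶ z) (h : z ⟶ y)
    (hg : R.neg g) (hh : R.pos h) (e : g ≫ h = f) :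
    sHmap G hG f = sUV G hG g hg ≫ G.map (sP h hh) := by
  have hu := (R.factor_existsUnique f).choose_spec.2 ⟨z, g, h⟩ ⟨hg, hh, e⟩
  exact sHmapAux_congr G hG hu.symm _ ⟨hg, hh⟩

theorem sHmap_pos {x y : C} (f : x ⟶ y) (hp : R.pos f) :
    sHmap G hG f = G.map (sP f hp) := by
  rw [sHmap_eq G hG (𝟙 x) f (R.neg_id x) hp (Category.id_comp f), sUV_id, Category.id_comp]

theorem sHmap_neg {x y : C} (f : x ⟶ y) (hn : R.neg f) :
    sHmap G hG f = sUV G hG f hn := by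
  rw [sHmap_eq G hG f (𝟙 y) hn (R.pos_id y) (Category.comp_id f), sP_id, G.map_id,
    Category.comp_id]

/-- The functor `H : C ⥤ E` induced by a weq-inverting, `≤`-respecting functor `G`. -/
noncomputable def strictH : C ⥤ E where
  obj c := G.obj (sPt R c)
  map f := sHmap G hG f
  map_id x := by
    show sHmap G hG (𝟙 x) = 𝟙 (G.obj (sPt R x))
    rw [sHmap_pos G hG (𝟙 x) (R.pos_id x), sP_id, G.map_id]
  map_comp {x y w} f₁ f₂ := by
    show sHmap G hG (f₁ ≫ f₂) = sHmap G hG f₁ ≫ sHmap G hG f₂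
    obtain ⟨⟨z₁, g₁, h₁⟩, ⟨hg₁, hh₁, e₁⟩, -⟩ := R.factor_existsUnique f₁
    obtain ⟨⟨z₂, g₂, h₂⟩, ⟨hg₂, hh₂, e₂⟩, -⟩ := R.factor_existsUnique f₂
    obtain ⟨⟨zm, gm, hm⟩, ⟨hgm, hhm, em⟩, -⟩ := R.factor_existsUnique (h₁ ≫ g₂)
    have hfact : (g₁ ≫ gm) ≫ hm ≫ h₂ = f₁ ≫ f₂ := by
      have em' : gm ≫ hm ≫ h₂ = h₁ ≫ g₂ ≫ h₂ := by
        rw [← Category.assoc, em, Category.assoc]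
      rw [← e₁, ← e₂]
      simp only [Category.assoc]
      rw [em']
    rw [sHmap_eq G hG (g₁ ≫ gm) (hm ≫ h₂) (R.neg_comp _ _ hg₁ hgm)
        (R.pos_comp _ _ hhm hh₂) hfact,
      sHmap_eq G hG g₁ h₁ hg₁ hh₁ e₁, sHmap_eq G hG g₂ h₂ hg₂ hh₂ e₂,
      sP_comp hm hhm h₂ hh₂, G.map_comp, sA G hG g₁ gm hg₁ hgm]
    have hB' := reassoc_of% (sB G hG hGle h₁ g₂ gm hm hh₁ hg₂ hgm hhm em.symm)
    simp only [Category.assoc]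
    rw [hB']

set_option maxHeartbeats 1000000 in
/-- The strict version of `negPsi`. -/
def sPsi (Q : StrictObj R) (j : Fin (Q.toNegObj.n + 1))
    (hnu : ¬IsIdMor (Q.toNegObj.X.map (homOfLE (Fin.le_last j)))) :
    sW (Q.toNegObj.X.map (homOfLE (Fin.le_last j))) (Q.toNegObj.negMap _) hnu ⟶ Q :=
  ⟨negPsi Q.toNegObj j, by
    have hjl : j ≠ Fin.last Q.toNegObj.n := fun hj => hnu (by
      rw [map_homOfLE_isid Q.toNegObj.X _ hj]; exact IsIdMor.eqToHom _)
    intro a b e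
    fin_cases a <;> fin_cases b
    · rfl
    · exact absurd e hjl
    · exact absurd e.symm hjl
    · rfl⟩

theorem sRelPsi1 (Q : StrictObj R) (j : Fin (Q.toNegObj.n + 1))
    (hnu : ¬IsIdMor (Q.toNegObj.X.map (homOfLE (Fin.le_last j)))) :
    sV _ (Q.toNegObj.negMap _) hnu ≫ sPsi Q j hnu = sEta Q :=
  Subtype.ext (relPsi1 Q.toNegObj j)

theorem sRelPsi2 {P Q : StrictObj R} (ψ : P ⟶ Q)
    (hnu : ¬IsIdMor (Q.toNegObj.X.map
      (homOfLE (Fin.le_last (ψ.1.1.α (Fin.last P.toNegObj.n)))))) :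
    sP (ψ.1.1.θ (Fin.last P.toNegObj.n)) (ψ.1.2 _) ≫
      sU _ (Q.toNegObj.negMap _) hnu ≫ sPsi Q (ψ.1.1.α (Fin.last P.toNegObj.n)) hnu =
    sEta P ≫ ψ :=
  Subtype.ext (relPsi2 ψ.1)

include hGle in
set_option maxHeartbeats 1000000 in
theorem sH_natural {P Q : StrictObj R} (ψ : P ⟶ Q) :
    sHmap G hG ((lastStrict R).map ψ) ≫ G.map (sEta Q) = G.map (sEta P) ≫ G.map ψ := by
  by_cases hnu : IsIdMor (Q.toNegObj.X.map
    (homOfLE (Fin.le_last (ψ.1.1.α (Fin.last P.toNegObj.n)))))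
  · have hjl : ψ.1.1.α (Fin.last P.toNegObj.n) = Fin.last Q.toNegObj.n := Q.idRefl _ hnu
    have hf : (lastStrict R).map ψ = ψ.1.1.θ (Fin.last P.toNegObj.n) ≫
        eqToHom (congrArg Q.toNegObj.X.obj hjl) := by
      erw [show (lastStrict R).map ψ = ψ.1.1.θ (Fin.last P.toNegObj.n) ≫
          Q.toNegObj.X.map (homOfLE (Fin.le_last _)) from rfl,
        map_homOfLE_isid Q.toNegObj.X _ hjl]
      rfl
    erw [hf, sHmap_pos G hG _ (pos_comp_eqToHom R _ (ψ.1.2 _) _), ← G.map_comp, ← G.map_comp]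
    congr 1
    refine StrictHom.ext2 (fun i => ?_) (fun i => ?_)
    · exact hjl.symm
    · show ((ψ.1.1.θ (Fin.last P.toNegObj.n) ≫ eqToHom (congrArg Q.toNegObj.X.obj hjl)) ≫
          eqToHom rfl) ≫
          eqToHom (congrArg Q.toNegObj.X.obj hjl.symm) =
        eqToHom rfl ≫ ψ.1.1.θ ((OrderHom.const _ (Fin.last P.toNegObj.n)) i)
      simp
      exact comp_eqToHom_eqToHom_self _ _ _
  · haveI := hG (sV _ (Q.toNegObj.negMap _) hnu) (isIdMor_lastS _ (isIdMor_negV _ _))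
    have hsplit : (lastStrict R).map ψ = ψ.1.1.θ (Fin.last P.toNegObj.n) ≫
        Q.toNegObj.X.map (homOfLE (Fin.le_last (ψ.1.1.α (Fin.last P.toNegObj.n)))) := rfl
    have hcomp : sHmap G hG (ψ.1.1.θ (Fin.last P.toNegObj.n) ≫
        Q.toNegObj.X.map (homOfLE (Fin.le_last (ψ.1.1.α (Fin.last P.toNegObj.n))))) =
        sHmap G hG (ψ.1.1.θ (Fin.last P.toNegObj.n)) ≫
          sHmap G hG (Q.toNegObj.X.map
            (homOfLE (Fin.le_last (ψ.1.1.α (Fin.last P.toNegObj.n))))) :=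
      (strictH G hG hGle).map_comp _ _
    erw [hsplit, hcomp, sHmap_pos G hG _ (ψ.1.2 _),
      sHmap_neg G hG _ (Q.toNegObj.negMap _), sUV_not G hG _ hnu,
      show sEta Q = sV _ (Q.toNegObj.negMap _) hnu ≫
        sPsi Q (ψ.1.1.α (Fin.last P.toNegObj.n)) hnu from (sRelPsi1 Q _ hnu).symm,
      G.map_comp]
    refine nat_aux _ _ _ _ _ _ (hv := by assumption) ?_
    erw [← G.map_comp, ← G.map_comp, sRelPsi2 ψ hnu, G.map_comp]
    rfl

end StrictH
/-! ### The case of `Down(C)` -/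

section DownCase

variable {R : ReedyStruct C}

/-- The quotient functor `∫N^{--,+}_+(C) → Down(C)`. -/
def qDown (R : ReedyStruct C) : StrictObj R ⥤ Down R where
  obj P := ⟨P⟩
  map f := Quot.mk _ f
  map_id _ := rfl
  map_comp _ _ := rfl

theorem lastDown_sEta (P : Down R) :
    (lastDown R).map (Quot.mk _ (sEta P.obj) :
        (⟨sPt R (P.obj.toNegObj.X.obj (Fin.last P.obj.toNegObj.n))⟩ : Down R) ⟶ ⟨P.obj⟩) =
      𝟙 ((lastDown R).obj
        (⟨sPt R (P.obj.toNegObj.X.obj (Fin.last P.obj.toNegObj.n))⟩ : Down R)) :=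
  lastNeg_map_negEta P.obj.toNegObj

theorem lastDown_sV {x z : C} (g : x ⟶ z) (hg : R.neg g) (hni : ¬IsIdMor g) :
    (lastDown R).map (Quot.mk _ (sV g hg hni) :
        (⟨sPt R z⟩ : Down R) ⟶ ⟨sW g hg hni⟩) = eqToHom rfl :=
  lastNeg_map_negV g hg

theorem lastDown_sU {x z : C} (g : x ⟶ z) (hg : R.neg g) (hni : ¬IsIdMor g) :
    (lastDown R).map (Quot.mk _ (sU g hg hni) :
        (⟨sPt R x⟩ : Down R) ⟶ ⟨sW g hg hni⟩) = g :=
  lastNeg_map_negU g hg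

theorem lastDown_sP {x y : C} (h : x ⟶ y) (hp : R.pos h) :
    (lastDown R).map (Quot.mk _ (sP h hp) :
        (⟨sPt R x⟩ : Down R) ⟶ ⟨sPt R y⟩) = h :=
  lastNeg_map_negP h hp

theorem downP1 {E : Type u₂} [Category.{v₂} E] (F G : C ⥤ E)
    (ε : lastDown R ⋙ F ⟶ lastDown R ⋙ G) :
    ∃! δ : F ⟶ G, Functor.whiskerLeft (lastDown R) δ = ε := by
  have hfix : ∀ P : Down R,
      ε.app ⟨sPt R (P.obj.toNegObj.X.obj (Fin.last P.obj.toNegObj.n))⟩ = ε.app P := by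
    intro P
    have h := ε.naturality
      (Quot.mk _ (sEta P.obj) :
        (⟨sPt R (P.obj.toNegObj.X.obj (Fin.last P.obj.toNegObj.n))⟩ : Down R) ⟶ ⟨P.obj⟩)
    dsimp at h
    rw [lastDown_sEta] at h
    exact map_id_cancel F G _ _ h.symm
  have hnat : ∀ ⦃c c' : C⦄ (f : c ⟶ c'),
      F.map f ≫ ε.app ⟨sPt R c'⟩ = ε.app ⟨sPt R c⟩ ≫ G.map f := by
    intro c c' f
    obtain ⟨⟨z, g, h⟩, ⟨hg, hh, he⟩, -⟩ := R.factor_existsUnique f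
    dsimp only at he
    by_cases hid : IsIdMor g
    · have hposf : R.pos f := by
        obtain ⟨e, rfl⟩ := hid
        subst e
        rw [← he]
        simpa using hh
      have h1 := ε.naturality
        (Quot.mk _ (sP f hposf) : (⟨sPt R c⟩ : Down R) ⟶ ⟨sPt R c'⟩)
      dsimp at h1
      rw [lastDown_sP] at h1
      exact h1
    · have hWpt : ε.app ⟨sW g hg hid⟩ = ε.app ⟨sPt R z⟩ := by
        have h1 := ε.naturality
          (Quot.mk _ (sV g hg hid) : (⟨sPt R z⟩ : Down R) ⟶ ⟨sW g hg hid⟩)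
        dsimp at h1
        rw [lastDown_sV] at h1
        exact (map_id_cancel F G _ _ h1.symm).symm
      have hups : F.map g ≫ ε.app ⟨sPt R z⟩ = ε.app ⟨sPt R c⟩ ≫ G.map g := by
        have h1 := ε.naturality
          (Quot.mk _ (sU g hg hid) : (⟨sPt R c⟩ : Down R) ⟶ ⟨sW g hg hid⟩)
        dsimp at h1
        rw [lastDown_sU] at h1
        rw [← hWpt]
        exact h1
      have hp : F.map h ≫ ε.app ⟨sPt R c'⟩ = ε.app ⟨sPt R z⟩ ≫ G.map h := by
        have h1 := ε.naturality
          (Quot.mk _ (sP h hh) : (⟨sPt R z⟩ : Down R) ⟶ ⟨sPt R c'⟩)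
        dsimp at h1
        rw [lastDown_sP] at h1
        exact h1
      erw [← he, F.map_comp, G.map_comp, Category.assoc, hp, ← Category.assoc, hups,
        Category.assoc]
      rfl
  refine ⟨⟨fun c => ε.app ⟨sPt R c⟩, hnat⟩, ?_, ?_⟩
  · ext P
    exact hfix P
  · intro δ' h'
    ext c
    exact congr_app h' (⟨sPt R c⟩ : Down R)

theorem downP2 {E : Type u₂} [Category.{v₂} E] (Gd : Down R ⥤ E)
    (hGd : ∀ {P Q : Down R} (f : P ⟶ Q),
      IsIdMor ((lastDown R).map f) → IsIso (Gd.map f)) :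
    ∃ H : C ⥤ E, Nonempty (lastDown R ⋙ H ≅ Gd) := by
  have hG : ∀ {P Q : StrictObj R} (f : P ⟶ Q), IsIdMor ((lastStrict R).map f) →
      IsIso ((qDown R ⋙ Gd).map f) := by
    intro P Q f hf
    exact hGd ((qDown R).map f) hf
  have hGle : ∀ {P Q : StrictObj R} (a b : P ⟶ Q), StrictHom.le a b →
      (qDown R ⋙ Gd).map a = (qDown R ⋙ Gd).map b := by
    intro P Q a b hle
    exact congrArg Gd.map (Quot.sound hle)
  refine ⟨strictH (qDown R ⋙ Gd) hG hGle, ⟨NatIso.ofComponents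
    (fun P => @asIso _ _ _ _ (Gd.map (Quot.mk _ (sEta P.obj)))
      (hGd (P := ⟨sPt R (P.obj.toNegObj.X.obj (Fin.last P.obj.toNegObj.n))⟩)
        (Quot.mk _ (sEta P.obj)) (isIdMor_negEta P.obj.toNegObj))) ?_⟩⟩
  intro P Q f
  induction f using Quot.ind with
  | _ f =>
    show sHmap (qDown R ⋙ Gd) hG ((lastStrict R).map f) ≫
        (qDown R ⋙ Gd).map (sEta Q.obj) =
      (qDown R ⋙ Gd).map (sEta P.obj) ≫ (qDown R ⋙ Gd).map f
    exact sH_natural (qDown R ⋙ Gd) hG hGle f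

theorem loc_down (R : ReedyStruct C) :
    IsWeakLocalizationAtLastWeq.{v₂, u₂} (lastDown R) :=
  isWeakLocalization_of _ downP1 (fun G hG => downP2 G hG)

end DownCase
section Statements

variable (R : ReedyStruct C)

theorem statement19 :
    IsWeakLocalizationAtLastWeq (lastChain (C := C)) ∧
    IsWeakLocalizationAtLastWeq (lastNeg R) ∧
    IsWeakLocalizationAtLastWeq (lastDownStar R) ∧
    IsWeakLocalizationAtLastWeq (lastDown R) := by
  exact ⟨loc_chain, loc_neg R, loc_downStar R, loc_down R⟩

end Statements

end ReedyPaper
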